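/- arXiv:2302.04731 — 6 statements merged into one kernel-verified Lean document; each statement's English description precedes it below -/
import Mathlib

section
/- If a hypothesis class 𝓗 ⊆ {0,1}^ℕ is CPAC learnable, then it admits a computable k-witness of VC dimension for some natural number k. -/
open Filter
open scoped ENNReal

/-- A hypothesis is a function `ℕ → Bool` (i.e. an element of `{0,1}^ℕ`). -/
abbrev Hyp := ℕ → Bool

/-- A sample is a finite sequence of labeled examples. -/
abbrev Sample := List (ℕ × Bool)

/-- A learner maps samples to hypotheses. -/
abbrev Learner := Sample → Hyp

/-- Generalization error `L_D(h) = Pr_{(x,y)∼D}[h(x) ≠ y]`. -/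
noncomputable def genError (D : PMF (ℕ × Bool)) (h : Hyp) : ℝ≥0∞ :=
  D.toOuterMeasure {p | h p.1 ≠ p.2}

/-- The distribution of `m` i.i.d. draws from `D`, as a PMF on samples of size `m`. -/
noncomputable def iidPMF (D : PMF (ℕ × Bool)) : ℕ → PMF Sample
  | 0 => PMF.pure []
  | m + 1 => D.bind fun p => (iidPMF D m).map (List.cons p)

/-- `Pr_{S ∼ D^m}[S ∈ E]`. -/
noncomputable def samplePr (D : PMF (ℕ × Bool)) (m : ℕ) (E : Set Sample) : ℝ≥0∞ :=
  (iidPMF D m).toOuterMeasure E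

/-- The PAC inequality for accuracy/confidence parameter `n` and sample size `m`:
for every distribution `D`,
`Pr_{S∼D^m}[L_D(A(S)) ≤ inf_{h∈H} L_D(h) + 1/n] ≥ 1 − 1/n`. -/
def PACCondition (A : Learner) (H : Set Hyp) (n m : ℕ) : Prop :=
  ∀ D : PMF (ℕ × Bool),
    1 - ((n : ℝ≥0∞))⁻¹ ≤
      samplePr D m {S | genError D (A S) ≤ (⨅ h ∈ H, genError D h) + ((n : ℝ≥0∞))⁻¹}

/-- `A` PAC learns `H`. -/
def PACLearns (A : Learner) (H : Set Hyp) : Prop :=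
  ∀ n : ℕ, ∃ m₀ : ℕ, ∀ m ≥ m₀, PACCondition A H n m

/-- The sample complexity of `A` w.r.t. `H`: the minimal `m₀` such that the PAC
inequality for `n` holds for all `m ≥ m₀`. -/
noncomputable def sampleComplexity (A : Learner) (H : Set Hyp) (n : ℕ) : ℕ :=
  sInf {m₀ | ∀ m ≥ m₀, PACCondition A H n m}

/-- A learner is computable if the two-argument function `(S, x) ↦ A(S)(x)` is computable
(equivalently, there is an algorithm producing from `S` a Turing machine computing the
total function `A(S)`). -/
def ComputableLearner (A : Learner) : Prop :=
  Computable₂ fun (S : Sample) (x : ℕ) => A S x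

/-- A learner is proper for `H` if it only outputs hypotheses from `H`. -/
def ProperFor (A : Learner) (H : Set Hyp) : Prop := ∀ S, A S ∈ H

/-- `H` is CPAC learnable: some computable learner PAC learns it. -/
def CPACLearnable (H : Set Hyp) : Prop :=
  ∃ A : Learner, ComputableLearner A ∧ PACLearns A H

/-- `H` is properly CPAC learnable. -/
def ProperlyCPACLearnable (H : Set Hyp) : Prop :=
  ∃ A : Learner, ComputableLearner A ∧ ProperFor A H ∧ PACLearns A H

/-- `H` is SCPAC learnable: some computable learner PAC learns it with sample complexity
bounded by a total computable function. -/
def SCPACLearnable (H : Set Hyp) : Prop :=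
  ∃ A : Learner, ComputableLearner A ∧ PACLearns A H ∧
    ∃ g : ℕ → ℕ, Computable g ∧ ∀ n, sampleComplexity A H n ≤ g n

/-- `H` is properly SCPAC learnable. -/
def ProperlySCPACLearnable (H : Set Hyp) : Prop :=
  ∃ A : Learner, ComputableLearner A ∧ ProperFor A H ∧ PACLearns A H ∧
    ∃ g : ℕ → ℕ, Computable g ∧ ∀ n, sampleComplexity A H n ≤ g n

/-- Empirical error `L_S(h) = |{i : h(x_i) ≠ y_i}| / |S|`. -/
noncomputable def empError (S : Sample) (h : Hyp) : ℝ≥0∞ :=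
  ((S.countP fun p => h p.1 != p.2 : ℕ) : ℝ≥0∞) / (S.length : ℝ≥0∞)

/-- `A` is an ERM for `H`: on every sample it outputs a hypothesis of `H` minimizing
the empirical error over `H`. -/
def IsERM (A : Learner) (H : Set Hyp) : Prop :=
  ∀ S : Sample, A S ∈ H ∧ ∀ h ∈ H, empError S (A S) ≤ empError S h

/-- `A` is an asymptotic ERM for `H`. -/
def IsAsymptoticERM (A : Learner) (H : Set Hyp) : Prop :=
  ProperFor A H ∧
  ∃ ε : ℕ → ℝ≥0∞, (∀ m, ε m ≤ 1) ∧ Tendsto ε atTop (nhds 0) ∧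
    ∀ S : Sample, empError S (A S) ≤ (⨅ h ∈ H, empError S h) + ε S.length

/-- `H` shatters the finite set `s`. -/
def Shatters (H : Set Hyp) (s : Finset ℕ) : Prop :=
  ∀ g : ℕ → Bool, ∃ h ∈ H, ∀ x ∈ s, h x = g x

/-- The VC dimension of `H` is at most `d`. -/
def VCDimAtMost (H : Set Hyp) (d : ℕ) : Prop :=
  ∀ s : Finset ℕ, Shatters H s → s.card ≤ d

/-- `H` has finite VC dimension. -/
def FiniteVCDim (H : Set Hyp) : Prop := ∃ d, VCDimAtMost H d

/-- `w` is a `k`-witness of VC dimension for `H`: on every increasing `(k+1)`-tuple it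
produces a Boolean `(k+1)`-tuple which is not the trace of any `h ∈ H` on the tuple. -/
def IsKWitness (k : ℕ) (w : List ℕ → List Bool) (H : Set Hyp) : Prop :=
  ∀ xs : List ℕ, xs.length = k + 1 → xs.Chain' (· < ·) →
    (w xs).length = k + 1 ∧ ∀ h ∈ H, xs.map h ≠ w xs

/-- The support of a hypothesis: `h⁻¹(1)`. -/
def hypSupport (h : Hyp) : Set ℕ := {x | h x = true}

/-- `h` is finitely supported. -/
def FinitelySupported (h : Hyp) : Prop := (hypSupport h).Finite

/-- The finitely supported hypothesis with support (the set of elements of) `l`. -/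
def listIndicator (l : List ℕ) : Hyp := fun x => decide (x ∈ l)

/-- A class of finitely supported hypotheses is decidable: there is an algorithm that,
given the support of a finitely supported `h` (as a list), decides whether `h ∈ H`. -/
def DecidableClass (H : Set Hyp) : Prop :=
  ∃ d : List ℕ → Bool, Computable d ∧ ∀ l : List ℕ, (d l = true ↔ listIndicator l ∈ H)

/-- `H` shatters the full binary tree of depth `d` whose node at binary path `p`
(with `|p| < d`) is labeled `t p`: every leaf (a binary path of length `d`) is reached
by some `h ∈ H`, going right at a node labeled `x` iff `h x = 1`. -/
def ShattersTree (H : Set Hyp) (d : ℕ) (t : List Bool → ℕ) : Prop :=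
  ∀ l : List Bool, l.length = d →
    ∃ h ∈ H, ∀ (i : ℕ) (hi : i < l.length), l[i] = h (t (l.take i))

/-! ### The class `𝓗_f` -/

/-- The `j`-th smallest element of the `k`-th block `I_k` of positive even numbers
(`1 ≤ j ≤ k`): `n_{kj} = k(k-1) + 2j`. -/
def nkj (k j : ℕ) : ℕ := k * (k - 1) + 2 * j

/-- The block `I_k` (of size `k`). -/
def Iblk (k : ℕ) : Finset ℕ := (Finset.Icc 1 k).image (nkj k)

/-- `h_{kj}`: the indicator of `I_k \ {n_{kj}}`. -/
def hkj (k j : ℕ) : Hyp := fun n => decide (n ∈ Iblk k ∧ n ≠ nkj k j)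

/-- `h_a`: the indicator of `I_{f(a)} ∪ {2a+1}`. -/
def hA (f : ℕ → ℕ) (a : ℕ) : Hyp := fun n => decide (n ∈ Iblk (f a) ∨ n = 2 * a + 1)

/-- The class `𝓗_f = {h_{kj} : 1 ≤ j ≤ k} ∪ {h_a : a ∈ ℕ}`. -/
def Hf (f : ℕ → ℕ) : Set Hyp :=
  {h | ∃ k j, 1 ≤ j ∧ j ≤ k ∧ h = hkj k j} ∪ {h | ∃ a, h = hA f a}

/-! ### Good hypotheses w.r.t. a witness -/

/-- `h` is good w.r.t. the `k`-witness `w`: it has finite support and disagrees with `w`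
on every increasing `(k+1)`-tuple lying strictly below `max supp(h)`. -/
def IsGood (k : ℕ) (w : List ℕ → List Bool) (h : Hyp) : Prop :=
  FinitelySupported h ∧
  ∀ xs : List ℕ, xs.length = k + 1 → xs.Chain' (· < ·) →
    (∀ x ∈ xs, x < sSup (hypSupport h)) → xs.map h ≠ w xs

/-- The set of good hypotheses w.r.t. `w`. -/
def Hgood (k : ℕ) (w : List ℕ → List Bool) : Set Hyp := {h | IsGood k w h}

/-! ### Auxiliary development for Statement 2 -/

set_option linter.unusedSectionVars false

namespace CW

variable {α β σ : Type*} [Primcodable α] [Primcodable β] [Primcodable σ]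

/-! generic list helpers -/

def listsOfLen (l : List α) : ℕ → List (List α)
  | 0 => [[]]
  | m+1 => (listsOfLen l m).flatMap fun s => l.map (· :: s)

theorem mem_listsOfLen {l : List α} {m : ℕ} {S : List α} :
    S ∈ listsOfLen l m ↔ S.length = m ∧ ∀ p ∈ S, p ∈ l := by
  induction m generalizing S with
  | zero => cases S <;> simp [listsOfLen]
  | succ m ih =>
    simp only [listsOfLen, List.mem_flatMap, List.mem_map]
    constructor
    · rintro ⟨s, hs, x, hx, rfl⟩
      obtain ⟨hlen, hmem⟩ := ih.1 hs
      refine ⟨by simp [hlen], fun p hp => ?_⟩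
      rcases List.mem_cons.1 hp with rfl | hp'
      · exact hx
      · exact hmem p hp'
    · rintro ⟨hlen, hmem⟩
      cases S with
      | nil => simp at hlen
      | cons x s =>
        refine ⟨s, ih.2 ⟨by simpa using hlen, fun p hp => hmem p (List.mem_cons_of_mem _ hp)⟩,
          x, hmem x List.mem_cons_self, rfl⟩

def zipD (d₁ : α) (d₂ : β) (u : List α) (v : List β) : List (α × β) :=
  (List.range (min u.length v.length)).map fun i => (u.getD i d₁, v.getD i d₂)

theorem zipD_eq (d₁ : α) (d₂ : β) (u : List α) (v : List β) : zipD d₁ d₂ u v = u.zip v := by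
  apply List.ext_getElem
  · simp [zipD]
  · intro i h1 h2
    simp only [zipD, List.getElem_map, List.getElem_range, List.getElem_zip]
    simp only [zipD, List.length_map, List.length_range, lt_min_iff] at h1
    rw [List.getD_eq_getElem _ _ h1.1, List.getD_eq_getElem _ _ h1.2]

def memB [DecidableEq α] (p : α) (l : List α) : Bool := l.any fun q => q == p

theorem memB_iff [DecidableEq α] (p : α) (l : List α) : memB p l = true ↔ p ∈ l := by
  simp [memB, List.any_eq_true]



def takeMap (f : α → List β) (g : α → β → σ) (a : α) : ℕ → List σ
  | 0 => []
  | n+1 => takeMap f g a n ++ (((f a)[n]?).elim [] fun b => [g a b])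

theorem takeMap_eq (f : α → List β) (g : α → β → σ) (a : α) (n : ℕ) :
    takeMap f g a n = ((f a).take n).map (g a) := by
  induction n with
  | zero => simp [takeMap]
  | succ n ih =>
    rw [takeMap, ih, List.take_succ, List.map_append]
    congr
    cases h : (f a)[n]? <;> simp [h]

theorem computable_list_map {f : α → List β} {g : α → β → σ}
    (hf : Computable f) (hg : Computable₂ g) :
    Computable fun a => (f a).map (g a) := by
  have hh : Computable₂ fun (a : α) (p : ℕ × List σ) =>
      p.2 ++ (((f a)[p.1]?).elim [] fun b => [g a b]) := by
    show Computable fun (p : α × ℕ × List σ) =>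
      p.2.2 ++ (((f p.1)[p.2.1]?).elim [] fun b => [g p.1 b])
    apply Computable.list_append.comp (Computable.snd.comp Computable.snd)
    have := Computable.option_casesOn
      (o := fun (p : α × ℕ × List σ) => (f p.1)[p.2.1]?)
      (f := fun (_ : α × ℕ × List σ) => ([] : List σ))
      (g := fun (p : α × ℕ × List σ) (b : β) => [g p.1 b])
      (Computable.list_getElem?.comp (hf.comp Computable.fst) (Computable.fst.comp Computable.snd))
      (Computable.const ([] : List σ))
      (Computable.list_cons.comp
        (hg.comp (Computable.fst.comp Computable.fst) Computable.snd)
        (Computable.const [])).to₂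
    exact this.of_eq fun p => by cases h : (f p.1)[p.2.1]? <;> simp [h]
  have H := Computable.nat_rec (Computable.list_length.comp hf) (Computable.const ([] : List σ)) hh
  apply H.of_eq
  intro a
  have key : ∀ n : ℕ, (Nat.rec ([] : List σ)
      (fun (y : ℕ) (IH : List σ) => IH ++ (((f a)[y]?).elim [] fun b => [g a b])) n) =
      takeMap f g a n := by
    intro n
    induction n with
    | zero => rfl
    | succ n ih => rw [takeMap, ← ih]
  exact ((key (f a).length).trans (takeMap_eq f g a _)).trans (by rw [List.take_length])

theorem computable_list_flatMap {f : α → List β} {g : α → β → List σ}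
    (hf : Computable f) (hg : Computable₂ g) :
    Computable fun a => (f a).flatMap (g a) := by
  have := Primrec.list_flatten.to_comp.comp (computable_list_map hf hg)
  exact this.of_eq fun a => by simp [List.flatMap]


/-! primrec lemmas -/

open Primrec in
theorem primrec_listsOfLen : Primrec₂ (listsOfLen : List α → ℕ → List (List α)) := by
  have hh : Primrec fun (r : (List α × ℕ) × (ℕ × List (List α))) =>
      r.2.2.flatMap fun s => r.1.1.map (· :: s) := by
    apply Primrec.list_flatMap (Primrec.snd.comp Primrec.snd)
    show Primrec fun (q : ((List α × ℕ) × ℕ × List (List α)) × List α) =>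
      q.1.1.1.map (· :: q.2)
    apply Primrec.list_map (Primrec.fst.comp (Primrec.fst.comp Primrec.fst))
    exact (Primrec.list_cons.comp Primrec.snd (Primrec.snd.comp Primrec.fst)).to₂
  have H := Primrec.nat_rec' (Primrec.snd : Primrec fun (p : List α × ℕ) => p.2)
    (Primrec.const [([] : List α)]) hh.to₂
  show Primrec fun (p : List α × ℕ) => listsOfLen p.1 p.2
  apply H.of_eq
  rintro ⟨l, n⟩
  induction n with
  | zero => rfl
  | succ n ih => exact congrArg (fun t => t.flatMap fun s => l.map (· :: s)) ih

theorem primrec_list_all {f : α → List β} {p : α → β → Bool}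
    (hf : Primrec f) (hp : Primrec₂ p) : Primrec fun a => (f a).all (p a) := by
  have H := Primrec.list_foldr hf (Primrec.const true)
    ((Primrec.dom_bool₂ (· && ·)).comp (hp.comp Primrec.fst (Primrec.fst.comp Primrec.snd))
      (Primrec.snd.comp Primrec.snd)).to₂
  apply H.of_eq
  intro a
  induction f a with
  | nil => rfl
  | cons x l ih => simp [List.all_cons, ih]

theorem primrec_list_countP {f : α → List β} {p : α → β → Bool}
    (hf : Primrec f) (hp : Primrec₂ p) : Primrec fun a => (f a).countP (p a) := by
  have H := Primrec.list_foldr hf (Primrec.const 0)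
    (Primrec.cond (hp.comp Primrec.fst (Primrec.fst.comp Primrec.snd))
      (Primrec.succ.comp (Primrec.snd.comp Primrec.snd))
      (Primrec.snd.comp Primrec.snd)).to₂
  apply H.of_eq
  intro a
  induction f a with
  | nil => rfl
  | cons x l ih =>
    rw [List.countP_cons]
    simp only [List.foldr_cons, ih]
    cases h : p a x <;> simp [h]

theorem primrec_zipD (d₁ : α) (d₂ : β) : Primrec₂ (zipD d₁ d₂) := by
  show Primrec fun (p : List α × List β) => zipD d₁ d₂ p.1 p.2
  unfold zipD
  apply Primrec.list_map
    (Primrec.list_range.comp (Primrec.nat_min.comp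
      (Primrec.list_length.comp Primrec.fst) (Primrec.list_length.comp Primrec.snd)))
  exact (Primrec.pair ((Primrec.list_getD d₁).comp (Primrec.fst.comp Primrec.fst) Primrec.snd)
    ((Primrec.list_getD d₂).comp (Primrec.snd.comp Primrec.fst) Primrec.snd)).to₂

theorem primrec_memB [DecidableEq α] : Primrec₂ (memB : α → List α → Bool) := by
  show Primrec fun (p : α × List α) => memB p.1 p.2
  unfold memB
  have : ∀ (p : α × List α), p.2.any (fun q => q == p.1) = !(p.2.all fun q => !(q == p.1)) := by
    intro p; induction p.2 with
    | nil => rfl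
    | cons x l ih => simp only [List.any_cons, List.all_cons, Bool.not_and, Bool.not_not, ih]
  refine Primrec.of_eq ?_ fun p => (this p).symm
  exact (Primrec.dom_bool (!·)).comp <| primrec_list_all Primrec.snd
    ((Primrec.dom_bool (!·)).comp (Primrec.beq.comp Primrec.snd (Primrec.fst.comp Primrec.fst))).to₂

/-! the witness function -/

def allPairs (xs : List ℕ) : List (ℕ × Bool) := xs.flatMap fun x => [(x, false), (x, true)]

def allBL (N : ℕ) : List (List Bool) := listsOfLen [false, true] N

def distL (u v : List Bool) : ℕ := (zipD false false u v).countP fun p => p.1 != p.2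

def wPred (xs : List ℕ) (T : List (Sample × List Bool)) (b : List Bool) : Bool :=
  T.all fun Su => !(Su.1.all fun p => memB p (zipD 0 false xs b)) ||
    decide (xs.length / 10 < distL Su.2 b)

def witCore (q : List ℕ × List (Sample × List Bool)) : List Bool :=
  (allBL q.1.length).getD ((allBL q.1.length).findIdx (wPred q.1 q.2)) []

def wit (A : Learner) (m : ℕ) (xs : List ℕ) : List Bool :=
  witCore (xs, (listsOfLen (allPairs xs) m).map fun S => (S, xs.map fun x => A S x))

theorem primrec_allPairs : Primrec allPairs := by
  unfold allPairs
  apply Primrec.list_flatMap Primrec.id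
  exact (Primrec.list_cons.comp (Primrec.pair Primrec.snd (Primrec.const false))
    ((Primrec.list_cons.comp (Primrec.pair Primrec.snd (Primrec.const true))
      (Primrec.const [])))).to₂

theorem primrec_allBL : Primrec allBL :=
  primrec_listsOfLen.comp (Primrec.const [false, true]) Primrec.id

theorem primrec_distL : Primrec₂ distL := by
  show Primrec fun (p : List Bool × List Bool) => distL p.1 p.2
  unfold distL
  apply primrec_list_countP (primrec_zipD false false |>.comp Primrec.fst Primrec.snd)
  exact ((Primrec.dom_finite (fun pr : Bool × Bool => pr.1 != pr.2)).comp Primrec.snd).to₂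

theorem primrec_witCore : Primrec witCore := by
  unfold witCore
  have hBL : Primrec fun (q : List ℕ × List (Sample × List Bool)) => allBL q.1.length :=
    primrec_allBL.comp (Primrec.list_length.comp Primrec.fst)
  have hpred : Primrec fun (c : (List ℕ × List (Sample × List Bool)) × List Bool) =>
      wPred c.1.1 c.1.2 c.2 := by
    unfold wPred
    apply primrec_list_all (Primrec.snd.comp Primrec.fst)
    show Primrec fun (c : ((List ℕ × List (Sample × List Bool)) × List Bool) ×
      (Sample × List Bool)) =>
      (!(c.2.1.all fun p => memB p (zipD 0 false c.1.1.1 c.1.2)) ||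
        decide (c.1.1.1.length / 10 < distL c.2.2 c.1.2))
    apply (Primrec.dom_bool₂ (· || ·)).comp
    · apply (Primrec.dom_bool (!·)).comp
      apply primrec_list_all (Primrec.fst.comp Primrec.snd)
      exact (primrec_memB.comp Primrec.snd
        ((primrec_zipD 0 false).comp
          (Primrec.fst.comp (Primrec.fst.comp (Primrec.fst.comp Primrec.fst)))
          (Primrec.snd.comp (Primrec.fst.comp Primrec.fst)))).to₂
    · exact PrimrecPred.decide <| Primrec.nat_lt.comp
        (Primrec.nat_div.comp
          (Primrec.list_length.comp (Primrec.fst.comp (Primrec.fst.comp Primrec.fst)))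
          (Primrec.const 10))
        (primrec_distL.comp (Primrec.snd.comp Primrec.snd)
          (Primrec.snd.comp Primrec.fst))
  exact (Primrec.list_getD []).comp hBL (Primrec.list_findIdx hBL hpred.to₂)

theorem computable_wit (A : Learner) (m : ℕ)
    (CA : Computable₂ fun (S : Sample) (x : ℕ) => A S x) : Computable (wit A m) := by
  have hsamp : Computable fun xs : List ℕ => listsOfLen (allPairs xs) m :=
    (primrec_listsOfLen.comp primrec_allPairs (Primrec.const m)).to_comp
  have hin : Computable fun (p : List ℕ × Sample) => (p.2, p.1.map fun x => A p.2 x) := by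
    apply Computable.pair Computable.snd
    exact computable_list_map (f := fun (p : List ℕ × Sample) => p.1)
      (g := fun p x => A p.2 x) Computable.fst
      (CA.comp (Computable.snd.comp Computable.fst) Computable.snd)
  have hT : Computable fun xs : List ℕ =>
      (listsOfLen (allPairs xs) m).map fun S => (S, xs.map fun x => A S x) :=
    computable_list_map hsamp (hin.comp (Computable.pair Computable.fst Computable.snd)).to₂
  exact (primrec_witCore.to_comp).comp (Computable.pair Computable.id hT)

end CW

namespace CW

/-! list lemmas -/

theorem mem_zip_self {h : Hyp} {xs : List ℕ} {p : ℕ × Bool}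
    (hp : p ∈ xs.zip (xs.map h)) : p.2 = h p.1 := by
  induction xs with
  | nil => simp at hp
  | cons x l ih =>
    rw [List.map_cons, List.zip_cons_cons, List.mem_cons] at hp
    rcases hp with rfl | hp
    · rfl
    · exact ih hp

theorem countP_zip_map (g : ℕ → Bool) (xs : List ℕ) (b : List Bool) :
    ((xs.map g).zip b).countP (fun p => p.1 != p.2)
      = (xs.zip b).countP (fun p => g p.1 != p.2) := by
  induction xs generalizing b with
  | nil => simp
  | cons x l ih =>
    cases b with
    | nil => simp
    | cons y c => simp [List.countP_cons, ih]

theorem distL_eq (u v : List Bool) :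
    distL u v = (u.zip v).countP (fun p => p.1 != p.2) := by
  rw [distL, zipD_eq]

/-! support of the iid sample distribution -/

theorem mem_support_iid (D : PMF (ℕ × Bool)) (m : ℕ) (S : Sample) :
    S ∈ (iidPMF D m).support ↔ S.length = m ∧ ∀ p ∈ S, p ∈ D.support := by
  induction m generalizing S with
  | zero =>
    rw [iidPMF, PMF.support_pure]
    constructor
    · rintro rfl
      exact ⟨rfl, by simp⟩
    · rintro ⟨hl, -⟩
      exact List.length_eq_zero_iff.mp hl
  | succ m ih =>
    rw [iidPMF, PMF.support_bind]
    simp only [PMF.support_map, Set.mem_iUnion, Set.mem_image]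
    constructor
    · rintro ⟨p, hp, S', hS', rfl⟩
      obtain ⟨hlen, hent⟩ := (ih S').mp hS'
      refine ⟨by simp [hlen], fun q hq => ?_⟩
      rcases List.mem_cons.1 hq with rfl | hq'
      · exact hp
      · exact hent q hq'
    · rintro ⟨hlen, hent⟩
      cases S with
      | nil => simp at hlen
      | cons p S' =>
        exact ⟨p, hent p List.mem_cons_self, S',
          (ih S').mpr ⟨by simpa using hlen, fun q hq => hent q (List.mem_cons_of_mem _ hq)⟩, rfl⟩

/-! the key bridge: realizable labelings are "bad" -/

theorem exists_bad_sample (A : Learner) (H : Set Hyp) (m : ℕ)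
    (hPAC : PACCondition A H 10 m) (xs : List ℕ) (hnd : xs.Nodup) (hne : xs ≠ [])
    (h : Hyp) (hh : h ∈ H) :
    ∃ S : Sample, S.length = m ∧ (∀ p ∈ S, p ∈ xs.zip (xs.map h)) ∧
      10 * distL (xs.map (A S)) (xs.map h) ≤ xs.length := by
  classical
  set b := xs.map h with hb
  set zl := xs.zip b with hzl
  have hlb : b.length = xs.length := by rw [hb, List.length_map]
  have hzl_len : zl.length = xs.length := by rw [hzl, List.length_zip, hlb, min_self]
  have hzl_nd : zl.Nodup := by
    have hmap : (zl.map Prod.fst).Nodup := by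
      rw [hzl, List.map_fst_zip (le_of_eq hlb.symm)]
      exact hnd
    exact hmap.of_map _
  have hne' : zl.toFinset.Nonempty := by
    rw [List.toFinset_nonempty_iff]
    intro h0
    apply hne
    have := hzl_len
    rw [h0] at this
    exact List.length_eq_zero_iff.mp this.symm
  have hcard : zl.toFinset.card = xs.length := by
    rw [List.toFinset_card_of_nodup hzl_nd, hzl_len]
  set D := PMF.uniformOfFinset zl.toFinset hne' with hD
  have hN0 : (xs.length : ℝ≥0∞) ≠ 0 := by
    simpa using (fun hl => hne (List.length_eq_zero_iff.mp hl))
  have hNtop : (xs.length : ℝ≥0∞) ≠ ⊤ := ENNReal.natCast_ne_top _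
  -- generalization error formula
  have gform : ∀ g : Hyp, genError D g =
      ((zl.toFinset.filter (· ∈ {p : ℕ × Bool | g p.1 ≠ p.2})).card : ℝ≥0∞) / xs.length := by
    intro g
    rw [genError, hD, PMF.toOuterMeasure_uniformOfFinset_apply, hcard]
    congr
  -- the target hypothesis has zero error
  have hzero : genError D h = 0 := by
    rw [gform h]
    have : zl.toFinset.filter (· ∈ {p : ℕ × Bool | h p.1 ≠ p.2}) = ∅ := by
      apply Finset.filter_eq_empty_iff.mpr
      intro p hp
      have := mem_zip_self (List.mem_toFinset.mp hp)
      simp only [Set.mem_setOf_eq]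
      intro hc
      exact hc this.symm
    rw [this]
    simp
  have hinf : (⨅ h' ∈ H, genError D h') = 0 := by
    apply le_antisymm _ zero_le
    calc (⨅ h' ∈ H, genError D h') ≤ genError D h := iInf₂_le h hh
    _ = 0 := hzero
  -- apply PAC
  have hP := hPAC D
  have hpos : samplePr D m {S | genError D (A S) ≤ (⨅ h' ∈ H, genError D h') + ((10:ℕ):ℝ≥0∞)⁻¹}
      ≠ 0 := by
    intro h0
    rw [h0] at hP
    have h1 : ((10:ℕ):ℝ≥0∞)⁻¹ < 1 := by
      rw [ENNReal.inv_lt_one]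
      norm_num
    exact absurd hP (by simpa using (tsub_pos_of_lt h1).ne')
  rw [samplePr] at hpos
  have hndis := (not_iff_not.mpr (PMF.toOuterMeasure_apply_eq_zero_iff _ _)).mp hpos
  obtain ⟨S, hSsupp, hSE⟩ := Set.not_disjoint_iff.mp hndis
  obtain ⟨hSlen, hSent⟩ := (mem_support_iid D m S).mp hSsupp
  refine ⟨S, hSlen, fun p hp => ?_, ?_⟩
  · have := hSent p hp
    rw [hD, PMF.support_uniformOfFinset] at this
    exact List.mem_toFinset.mp this
  -- now extract the distance bound
  · have hle : genError D (A S) ≤ ((10:ℕ):ℝ≥0∞)⁻¹ := by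
      have := hSE
      simp only [Set.mem_setOf_eq, hinf, zero_add] at this
      exact this
    rw [gform (A S)] at hle
    set cnt := (zl.toFinset.filter (· ∈ {p : ℕ × Bool | A S p.1 ≠ p.2})).card with hcnt
    -- from cnt / N ≤ 1/10 deduce 10 * cnt ≤ N
    have step1 : (cnt : ℝ≥0∞) ≤ ((10:ℕ):ℝ≥0∞)⁻¹ * xs.length := by
      have := mul_le_mul_left hle (xs.length : ℝ≥0∞)
      rwa [ENNReal.div_mul_cancel hN0 hNtop] at this
    have step2 : ((10:ℕ):ℝ≥0∞) * cnt ≤ xs.length := by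
      calc ((10:ℕ):ℝ≥0∞) * cnt ≤ ((10:ℕ):ℝ≥0∞) * (((10:ℕ):ℝ≥0∞)⁻¹ * xs.length) :=
            mul_le_mul_right step1 _
      _ = (((10:ℕ):ℝ≥0∞) * ((10:ℕ):ℝ≥0∞)⁻¹) * xs.length := by ring
      _ = xs.length := by
          rw [ENNReal.mul_inv_cancel (by norm_num) (by norm_num), one_mul]
    have hnat : 10 * cnt ≤ xs.length := by exact_mod_cast step2
    -- identify cnt with distL
    have hident : cnt = distL (xs.map (A S)) b := by
      rw [distL_eq, countP_zip_map, hcnt]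
      have e1 : zl.toFinset.filter (· ∈ {p : ℕ × Bool | A S p.1 ≠ p.2})
          = zl.toFinset.filter (fun p => (A S p.1 != p.2) = true) := by
        apply Finset.filter_congr
        intro p _
        simp [bne_iff_ne]
      rw [e1, ← List.toFinset_filter,
        List.toFinset_card_of_nodup (hzl_nd.filter _), ← List.countP_eq_length_filter]
    rw [← hident]
    exact hnat

end CW


namespace CW

theorem mem_allBL {N : ℕ} {b : List Bool} : b ∈ allBL N ↔ b.length = N := by
  rw [allBL, mem_listsOfLen]
  exact ⟨fun h => h.1, fun h => ⟨h, fun p _ => by cases p <;> simp⟩⟩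

theorem mem_allPairs {xs : List ℕ} {p : ℕ × Bool} (hp : p.1 ∈ xs) : p ∈ allPairs xs := by
  rw [allPairs, List.mem_flatMap]
  refine ⟨p.1, hp, ?_⟩
  rcases p with ⟨x, b⟩
  cases b <;> simp

theorem countP_zip_index : ∀ (N : ℕ) (u v : List Bool), u.length = N → v.length = N →
    (u.zip v).countP (fun p => p.1 != p.2)
      = (List.range N).countP (fun i => u.getD i false != v.getD i false)
  | 0, u, v, hu, hv => by
      rw [List.length_eq_zero_iff.mp hu, List.length_eq_zero_iff.mp hv]; rfl
  | (N+1), u, v, hu, hv => by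
      match u, v with
      | x :: u', y :: v' =>
        rw [List.zip_cons_cons, List.countP_cons, List.range_succ_eq_map, List.countP_cons,
          List.countP_map]
        have := countP_zip_index N u' v' (by simpa using hu) (by simpa using hv)
        simp only [Function.comp_def, Nat.succ_eq_add_one, List.getD_cons_succ,
          List.getD_cons_zero]
        rw [this]

theorem binom_sum_bound (N t : ℕ) (ht : t ≤ N) :
    (∑ j ∈ Finset.range (t+1), N.choose j) * 2^(N-t) ≤ 3^N := by
  calc (∑ j ∈ Finset.range (t+1), N.choose j) * 2^(N-t)
      = ∑ j ∈ Finset.range (t+1), N.choose j * 2^(N-t) := by rw [Finset.sum_mul]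
    _ ≤ ∑ j ∈ Finset.range (t+1), N.choose j * 2^(N-j) := by
        apply Finset.sum_le_sum
        intro j hj
        have hj' : j ≤ t := Nat.lt_succ_iff.mp (Finset.mem_range.mp hj)
        exact Nat.mul_le_mul_left _ (Nat.pow_le_pow_right (by norm_num) (by omega))
    _ ≤ ∑ j ∈ Finset.range (N+1), N.choose j * 2^(N-j) :=
        Finset.sum_le_sum_of_subset (Finset.range_subset_range.mpr (by omega))
    _ = (1+2)^N := by
        rw [add_pow (R := ℕ) 1 2 N]
        apply Finset.sum_congr rfl
        intro j _
        rw [one_pow, one_mul, mul_comm, Nat.cast_id]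
    _ = 3^N := by norm_num

theorem ball_card_bound (N t : ℕ) (u : List Bool) (F : Finset (List Bool))
    (hF : ∀ b ∈ F, b.length = N) (hu : u.length = N) :
    (F.filter (fun b => distL u b ≤ t)).card ≤ ∑ j ∈ Finset.range (t+1), N.choose j := by
  classical
  have hft : ((Finset.range N).powerset.filter (fun sf => sf.card ≤ t)).card
      = ∑ j ∈ Finset.range (t+1), N.choose j := by
    have hsplit : (Finset.range N).powerset.filter (fun sf => sf.card ≤ t)
        = (Finset.range (t+1)).biUnion (fun j => Finset.powersetCard j (Finset.range N)) := by
      ext sf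
      simp only [Finset.mem_filter, Finset.mem_powerset, Finset.mem_biUnion, Finset.mem_range,
        Finset.mem_powersetCard, Nat.lt_succ_iff]
      constructor
      · rintro ⟨hsub, hc⟩; exact ⟨sf.card, hc, hsub, rfl⟩
      · rintro ⟨j, hj, hsub, rfl⟩; exact ⟨hsub, hj⟩
    rw [hsplit, Finset.card_biUnion]
    · apply Finset.sum_congr rfl
      intro j _
      rw [Finset.card_powersetCard, Finset.card_range]
    · intro a _ c _ hac
      simp only [Finset.disjoint_left, Finset.mem_powersetCard]
      rintro sf ⟨-, rfl⟩ ⟨-, hc⟩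
      exact hac hc
  rw [← hft]
  apply Finset.card_le_card_of_injOn
    (fun b => ((List.range N).filter (fun i => u.getD i false != b.getD i false)).toFinset)
  · intro b hb
    rw [Finset.mem_coe, Finset.mem_filter] at hb
    obtain ⟨hbF, hdist⟩ := hb
    rw [Finset.mem_coe, Finset.mem_filter, Finset.mem_powerset]
    constructor
    · intro i hi
      rw [List.mem_toFinset, List.mem_filter] at hi
      exact Finset.mem_range.mpr (List.mem_range.mp hi.1)
    · have hlen : b.length = N := hF b hbF
      have hcardeq : ((List.range N).filter
          (fun i => u.getD i false != b.getD i false)).toFinset.card = distL u b := by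
        rw [List.toFinset_card_of_nodup ((List.nodup_range (n := N)).filter _),
          ← List.countP_eq_length_filter, distL_eq, countP_zip_index N u b hu hlen]
      rw [hcardeq]
      exact hdist
  · intro b₁ hb₁ b₂ hb₂ heq
    dsimp only at heq
    rw [Finset.mem_coe, Finset.mem_filter] at hb₁ hb₂
    have hl₁ : b₁.length = N := hF b₁ hb₁.1
    have hl₂ : b₂.length = N := hF b₂ hb₂.1
    apply List.ext_getElem (by rw [hl₁, hl₂])
    intro i hi₁ hi₂
    have hiN : i < N := by omega
    have hmem : ∀ b : List Bool,
        (i ∈ ((List.range N).filter (fun j => u.getD j false != b.getD j false)).toFinset)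
          ↔ (u.getD i false != b.getD i false) = true := by
      intro b
      rw [List.mem_toFinset, List.mem_filter, List.mem_range]
      exact ⟨fun h => h.2, fun h => ⟨hiN, h⟩⟩
    have hiff := ((hmem b₁).symm.trans (by rw [heq])).trans (hmem b₂)
    have hgd : b₁.getD i false = b₂.getD i false := by
      revert hiff
      cases u.getD i false <;> cases b₁.getD i false <;> cases b₂.getD i false <;> simp
    rwa [List.getD_eq_getElem _ _ (by omega), List.getD_eq_getElem _ _ (by omega)] at hgd

theorem key_arith (m : ℕ) :
    (2^(10*m+5))^m * 2^m * 3^(2^(10*m+5))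
      < 2^(2^(10*m+5)) * 2^(2^(10*m+5) - 2^(10*m+5)/10) := by
  set s := 10*m+5 with hs
  set N := 2^s with hN
  set t := N/10 with ht
  have hts : 10 * t ≤ N := by
    rw [ht, mul_comm]
    exact Nat.div_mul_le_self N 10
  have htN : t ≤ N := Nat.div_le_self _ _
  -- pass to 10-th powers
  have pow10 : ∀ a b : ℕ, a^10 < b^10 → a < b := by
    intro a b h
    by_contra hle
    push_neg at hle
    exact absurd (Nat.pow_le_pow_left hle 10) (not_le.mpr h)
  apply pow10
  have hexp : s*(m*10) + m*10 < 3*N := by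
    have h5 : 5*m + 1 ≤ 2^(5*m) := Nat.lt_two_pow_self
    have h10 : (5*m+1)^2 ≤ 2^(10*m) := by
      calc (5*m+1)^2 ≤ (2^(5*m))^2 := Nat.pow_le_pow_left h5 2
      _ = 2^(10*m) := by rw [← pow_mul]; ring_nf
    have hNge : 3*N ≥ 96 * (5*m+1)^2 := by
      have : N = 32 * 2^(10*m) := by rw [hN, hs, pow_add]; ring
      rw [this]
      calc 96 * (5*m+1)^2 ≤ 96 * 2^(10*m) := by
            exact Nat.mul_le_mul_left _ h10
      _ = 3 * (32 * 2^(10*m)) := by ring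
    have : s*(m*10) + m*10 = 10*m*(10*m+6) := by rw [hs]; ring
    rw [this]
    nlinarith [hNge, sq_nonneg (5*m+1)]
  have hsub : (N - t) * 10 = N*10 - t*10 := by omega
  have hexp2 : 19*N ≤ N*10 + (N-t)*10 := by omega
  calc (N^m * 2^m * 3^N)^10
      = N^(m*10) * 2^(m*10) * 3^(N*10) := by simp [mul_pow, pow_mul]
    _ = 2^(s*(m*10) + m*10) * 3^(N*10) := by rw [hN, ← pow_mul, pow_add]; ring
    _ ≤ 2^(s*(m*10) + m*10) * 2^(16*N) := by
        apply Nat.mul_le_mul_left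
        calc 3^(N*10) = (3^10)^N := by rw [mul_comm, pow_mul]
        _ ≤ (2^16)^N := Nat.pow_le_pow_left (by norm_num) N
        _ = 2^(16*N) := (pow_mul 2 16 N).symm
    _ < 2^(3*N) * 2^(16*N) := by
        exact mul_lt_mul_of_pos_right (Nat.pow_lt_pow_right (by norm_num) hexp)
          (by positivity)
    _ = 2^(19*N) := by rw [← pow_add]; ring_nf
    _ ≤ 2^(N*10 + (N-t)*10) := Nat.pow_le_pow_right (by norm_num) hexp2
    _ = (2^N * 2^(N-t))^10 := by rw [pow_add, pow_mul, pow_mul, mul_pow]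

end CW


namespace CW

theorem mem_allPairs_fst {xs : List ℕ} {p : ℕ × Bool} (hp : p ∈ allPairs xs) : p.1 ∈ xs := by
  rw [allPairs, List.mem_flatMap] at hp
  obtain ⟨x, hx, hpx⟩ := hp
  simp only [List.mem_cons, List.mem_singleton, List.not_mem_nil, or_false] at hpx
  rcases hpx with rfl | rfl <;> exact hx

theorem exists_good (A : Learner) (m : ℕ) (xs : List ℕ) (hnd : xs.Nodup)
    (hlen : xs.length = 2^(10*m+5)) :
    ∃ b ∈ allBL xs.length,
      wPred xs ((listsOfLen (allPairs xs) m).map fun S => (S, xs.map fun x => A S x)) b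
        = true := by
  classical
  by_contra hcon
  push_neg at hcon
  set N := xs.length with hNdef
  set t := N / 10 with htdef
  set T := (listsOfLen (allPairs xs) m).map fun S => (S, xs.map fun x => A S x) with hT
  set allF := (allBL N).toFinset with hallF
  have hbad : ∀ b ∈ allF, ∃ S, S ∈ listsOfLen (allPairs xs) m ∧
      distL (xs.map (A S)) b ≤ t := by
    intro b hb
    have h1 := hcon b (List.mem_toFinset.mp hb)
    rw [wPred, Ne, List.all_eq_true] at h1
    push_neg at h1
    obtain ⟨Su, hSuT, hSu⟩ := h1
    rw [hT, List.mem_map] at hSuT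
    obtain ⟨S, hS, rfl⟩ := hSuT
    refine ⟨S, hS, ?_⟩
    simp only [Bool.not_eq_true, Bool.or_eq_false_iff, decide_eq_false_iff_not,
      not_lt] at hSu
    exact hSu.2
  have hsub : 2^N ≤ allF.card := by
    have hinj : Set.InjOn (fun g : Fin N → Bool => List.ofFn g)
        (Finset.univ : Finset (Fin N → Bool)) := by
      intro g₁ _ g₂ _ h
      exact List.ofFn_injective h
    calc 2^N = Fintype.card (Fin N → Bool) := by simp
    _ = (Finset.univ : Finset (Fin N → Bool)).card := Finset.card_univ.symm
    _ ≤ allF.card := Finset.card_le_card_of_injOn _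
        (fun g _ => List.mem_toFinset.mpr (mem_allBL.mpr List.length_ofFn)) hinj
  set C : ((Fin m → Fin N) × (Fin m → Bool)) → Sample :=
    fun κ => List.ofFn fun r => (xs.getD (κ.1 r) 0, κ.2 r) with hC
  have hcover : allF ⊆ Finset.univ.biUnion
      (fun κ => allF.filter fun b => distL (xs.map (A (C κ))) b ≤ t) := by
    intro b hb
    obtain ⟨S, hS, hdist⟩ := hbad b hb
    obtain ⟨hSlen, hSent⟩ := mem_listsOfLen.mp hS
    have hpmem : ∀ r : Fin m, (S.getD r (0, false)).1 ∈ xs := by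
      intro r
      have hr : (r : ℕ) < S.length := by rw [hSlen]; exact r.isLt
      have hmem : S.getD r (0,false) ∈ S := by
        rw [List.getD_eq_getElem _ _ hr]
        exact List.getElem_mem _
      exact mem_allPairs_fst (hSent _ hmem)
    set κ : (Fin m → Fin N) × (Fin m → Bool) :=
      (fun r => ⟨xs.idxOf (S.getD r (0,false)).1,
          List.idxOf_lt_length_iff.mpr (hpmem r)⟩,
       fun r => (S.getD r (0,false)).2) with hκ
    have hCS : C κ = S := by
      apply List.ext_getElem (by simp [hC, hSlen])
      intro i h1 h2
      have hiS : i < S.length := h2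
      have him : i < m := by rw [hSlen] at hiS; exact hiS
      have e1 : (C κ)[i] = (xs.getD (xs.idxOf (S.getD i (0,false)).1) 0,
          (S.getD i (0,false)).2) := by
        simp only [hC, hκ, List.getElem_ofFn]
      rw [e1, List.getD_eq_getElem _ _ hiS]
      have hx : S[i].1 ∈ xs := mem_allPairs_fst (hSent _ (List.getElem_mem _))
      rw [List.getD_eq_getElem _ _ (List.idxOf_lt_length_iff.mpr hx),
        List.getElem_idxOf]
    refine Finset.mem_biUnion.mpr ⟨κ, Finset.mem_univ _, Finset.mem_filter.mpr ⟨hb, ?_⟩⟩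
    rw [hCS]
    exact hdist
  have hEnt : ∀ b ∈ allF, b.length = N := fun b hb => mem_allBL.mp (List.mem_toFinset.mp hb)
  have hb1 : allF.card ≤ (N^m * 2^m) * (∑ j ∈ Finset.range (t+1), N.choose j) := by
    have hKcard : Fintype.card ((Fin m → Fin N) × (Fin m → Bool)) = N^m * 2^m := by
      simp [Fintype.card_fun]
    calc allF.card
        ≤ (Finset.univ.biUnion
            (fun κ => allF.filter fun b => distL (xs.map (A (C κ))) b ≤ t)).card :=
          Finset.card_le_card hcover
      _ ≤ ∑ κ ∈ Finset.univ,
            (allF.filter fun b => distL (xs.map (A (C κ))) b ≤ t).card :=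
          Finset.card_biUnion_le
      _ ≤ (Finset.univ : Finset ((Fin m → Fin N) × (Fin m → Bool))).card
            • (∑ j ∈ Finset.range (t+1), N.choose j) := by
          apply Finset.sum_le_card_nsmul
          intro κ _
          exact ball_card_bound N t _ allF hEnt (by rw [List.length_map])
      _ = (N^m * 2^m) * (∑ j ∈ Finset.range (t+1), N.choose j) := by
          rw [smul_eq_mul, Finset.card_univ, hKcard]
  have hbinom := binom_sum_bound N t (Nat.div_le_self _ _)
  have hfinal : 2^N * 2^(N-t) ≤ N^m * 2^m * 3^N := by
    calc 2^N * 2^(N-t) ≤ allF.card * 2^(N-t) := Nat.mul_le_mul_right _ hsub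
    _ ≤ ((N^m * 2^m) * (∑ j ∈ Finset.range (t+1), N.choose j)) * 2^(N-t) :=
        Nat.mul_le_mul_right _ hb1
    _ = (N^m * 2^m) * ((∑ j ∈ Finset.range (t+1), N.choose j) * 2^(N-t)) := by ring
    _ ≤ (N^m * 2^m) * 3^N := Nat.mul_le_mul_left _ hbinom
  have hkey : N^m * 2^m * 3^N < 2^N * 2^(N - t) := by
    have hNe : N = 2^(10*m+5) := hNdef.trans hlen
    rw [htdef, hNe]
    exact key_arith m
  exact absurd hfinal (not_le.mpr hkey)

end CW


namespace CW

theorem wit_spec (A : Learner) (m : ℕ) (xs : List ℕ)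
    (hex : ∃ b ∈ allBL xs.length,
      wPred xs ((listsOfLen (allPairs xs) m).map fun S => (S, xs.map fun x => A S x)) b
        = true) :
    wit A m xs ∈ allBL xs.length ∧
      wPred xs ((listsOfLen (allPairs xs) m).map fun S => (S, xs.map fun x => A S x))
        (wit A m xs) = true := by
  set T := (listsOfLen (allPairs xs) m).map fun S => (S, xs.map fun x => A S x) with hT
  have hlt := List.findIdx_lt_length_of_exists hex
  have hwit : wit A m xs = (allBL xs.length).getD
      ((allBL xs.length).findIdx (wPred xs T)) [] := rfl
  rw [hwit, List.getD_eq_getElem _ _ hlt]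
  exact ⟨List.getElem_mem _, List.findIdx_getElem (w := hlt)⟩

end CW


/-- If `H` is CPAC learnable, then it admits a computable `k`-witness
of VC dimension for some natural number `k`. -/
theorem computable_witness_of_CPAC (H : Set Hyp) (hH : CPACLearnable H) :
    ∃ k : ℕ, ∃ w : List ℕ → List Bool, Computable w ∧ IsKWitness k w H := by
  obtain ⟨A, CA, hPL⟩ := hH
  obtain ⟨m, hm⟩ := hPL 10
  have hPAC : PACCondition A H 10 m := hm m le_rfl
  refine ⟨2^(10*m+5) - 1, CW.wit A m, CW.computable_wit A m CA, ?_⟩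
  intro xs hxlen hchain
  have hpow : 1 ≤ 2^(10*m+5) := Nat.one_le_two_pow
  have hN : xs.length = 2^(10*m+5) := by rw [hxlen]; omega
  have hnd : xs.Nodup := (List.isChain_iff_pairwise.mp hchain).imp (fun h => ne_of_lt h)
  obtain ⟨hmem, hgood⟩ := CW.wit_spec A m xs (CW.exists_good A m xs hnd hN)
  constructor
  · rw [CW.mem_allBL.mp hmem, hxlen]
  · intro h hhH heq
    set b := CW.wit A m xs with hbdef
    have hne : xs ≠ [] := by
      intro h0
      rw [h0] at hN
      simp at hN
      omega
    obtain ⟨S, hSlen, hSent, hSdist⟩ := CW.exists_bad_sample A H m hPAC xs hnd hne h hhH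
    rw [heq] at hSent hSdist
    have hSmem : S ∈ CW.listsOfLen (CW.allPairs xs) m :=
      CW.mem_listsOfLen.mpr ⟨hSlen, fun p hp =>
        CW.mem_allPairs (List.of_mem_zip (hSent p hp)).1⟩
    have hSu : ((S, xs.map fun x => A S x)) ∈ (CW.listsOfLen (CW.allPairs xs) m).map
        (fun S => (S, xs.map fun x => A S x)) := List.mem_map_of_mem hSmem
    have hthis := (List.all_eq_true.mp hgood) _ hSu
    have hall : (S.all fun p => CW.memB p (CW.zipD 0 false xs b)) = true := by
      rw [List.all_eq_true]
      intro p hp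
      rw [CW.memB_iff, CW.zipD_eq]
      exact hSent p hp
    dsimp only at hthis
    rw [hall] at hthis
    simp only [Bool.not_true, Bool.false_or, decide_eq_true_eq] at hthis
    have he : (xs.map fun x => A S x) = xs.map (A S) := rfl
    rw [he] at hthis
    have hle : CW.distL (xs.map (A S)) b ≤ xs.length / 10 :=
      (Nat.le_div_iff_mul_le (by norm_num)).mpr (by omega)
    omega
end

section
/- If a hypothesis class 𝓗 ⊆ {0,1}^ℕ is properly CPAC learnable, then 𝓗 has a computable asymptotic ERM. -/
open Filter
open scoped ENNReal

/-! ### Auxiliary machinery for Statement 7 -/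

namespace CpacAux

/-! #### A computable `foldl` -/

private def loopF {β σ : Type} (F : σ → β → σ) (p : List β × σ) : List β × σ :=
  (p.1.tail, (p.1.head?.map fun b => F p.2 b).getD p.2)

private theorem foldl_loop {β σ : Type} (F : σ → β → σ) (l : List β) (s : σ) (k : ℕ) :
    (Nat.rec (motive := fun _ => List β × σ) (l, s) (fun _ p => loopF F p) k)
      = (l.drop k, (l.take k).foldl F s) := by
  induction k with
  | zero => simp
  | succ k ih =>
    show loopF F (Nat.rec (motive := fun _ => List β × σ) (l, s)
        (fun _ p => loopF F p) k) = _
    rw [ih]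
    unfold loopF
    rcases hd : l[k]? with _ | b
    · have hk : l.length ≤ k := by
        by_contra hlt
        push_neg at hlt
        simp [List.getElem?_eq_getElem hlt] at hd
      simp [List.head?_drop, List.take_succ, hd, List.tail_drop]
    · simp [List.head?_drop, List.take_succ, hd, List.tail_drop]

theorem comp_foldl {α β σ : Type} [Primcodable α] [Primcodable β] [Primcodable σ]
    {f : α → List β} {g : α → σ} {h : α → σ × β → σ}
    (hf : Computable f) (hg : Computable g) (hh : Computable₂ h) :
    Computable fun a => (f a).foldl (fun s b => h a (s, b)) (g a) := by
  have cl : Computable fun x : α × (ℕ × (List β × σ)) => x.2.2.1 :=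
    Computable.fst.comp (Computable.snd.comp Computable.snd)
  have cs : Computable fun x : α × (ℕ × (List β × σ)) => x.2.2.2 :=
    Computable.snd.comp (Computable.snd.comp Computable.snd)
  have ctail : Computable fun x : α × (ℕ × (List β × σ)) => x.2.2.1.tail :=
    Primrec.list_tail.to_comp.comp cl
  have chead : Computable fun x : α × (ℕ × (List β × σ)) => x.2.2.1.head? :=
    Primrec.list_head?.to_comp.comp cl
  have cmap : Computable fun x : α × (ℕ × (List β × σ)) =>
      x.2.2.1.head?.map fun b => h x.1 (x.2.2.2, b) :=
    Computable.option_map chead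
      (hh.comp (Computable.fst.comp Computable.fst)
        ((cs.comp Computable.fst).pair Computable.snd))
  have cstep : Computable₂ fun (a : α) (p : ℕ × (List β × σ)) =>
      loopF (fun s b => h a (s, b)) p.2 :=
    (ctail.pair (Computable.option_getD cmap cs)).to₂
  have cloop : Computable fun a =>
      Nat.rec (motive := fun _ => List β × σ) (f a, g a)
        (fun _ p => loopF (fun s b => h a (s, b)) p) (f a).length := by
    have := Computable.nat_rec (Computable.list_length.comp hf) (hf.pair hg) cstep
    exact this.of_eq fun a => by rfl
  have := Computable.snd.comp cloop
  exact this.of_eq fun a => by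
    rw [foldl_loop]
    simp

/-! #### Tuples, scores and the empirical search -/

/-- All length-`m` tuples with entries from `S`. -/
def tuples (S : Sample) : ℕ → List Sample
  | 0 => [[]]
  | m + 1 => (tuples S m).flatMap fun T => S.map fun p => p :: T

theorem mem_tuples {S : Sample} : ∀ {m : ℕ} {T : Sample},
    T.length = m → (∀ p ∈ T, p ∈ S) → T ∈ tuples S m := by
  intro m
  induction m with
  | zero => intro T h _; simp [List.length_eq_zero_iff.mp h, tuples]
  | succ m ih =>
    intro T h hmem
    match T with
    | p :: T' =>
      simp only [tuples, List.mem_flatMap, List.mem_map]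
      exact ⟨T', ih (by simpa using h) (fun q hq => hmem q (List.mem_cons_of_mem _ hq)),
        p, hmem p List.mem_cons_self, rfl⟩

theorem tuples_primrec : Primrec₂ tuples := by
  have inner : Primrec₂ fun (S : Sample) (L : List Sample) =>
      L.flatMap fun T => S.map fun p => p :: T := by
    have h1 : Primrec₂ fun (x : Sample × List Sample) (T : Sample) =>
        x.1.map fun p => p :: T :=
      Primrec.to₂ <| Primrec.list_map (Primrec.fst.comp Primrec.fst)
        (Primrec.list_cons.comp Primrec.snd (Primrec.snd.comp Primrec.fst)).to₂
    exact Primrec.to₂ <| Primrec.list_flatten.comp (Primrec.list_map Primrec.snd h1)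
  have := Primrec.nat_rec (f := fun _ : Sample => ([[]] : List Sample))
    (g := fun (S : Sample) (p : ℕ × List Sample) => p.2.flatMap fun T => S.map fun q => q :: T)
    (Primrec.const _)
    (inner.comp Primrec.fst (Primrec.snd.comp Primrec.snd)).to₂
  exact Primrec₂.of_eq this fun S m => by
    induction m with
    | zero => rfl
    | succ m ih => simp only [tuples, ← ih]

/-- The number of points of `S` misclassified by `A T`. -/
def score (A : Learner) (T S : Sample) : ℕ := S.countP fun p => A T p.1 != p.2

theorem countP_foldl {α : Type*} (q : α → Bool) (l : List α) : ∀ n : ℕ,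
    l.foldl (fun k a => k + (bif q a then 1 else 0)) n = n + l.countP q := by
  induction l with
  | nil => intro n; simp
  | cons a l ih =>
    intro n
    simp only [List.foldl_cons, List.countP_cons, ih]
    cases q a <;> simp <;> omega

theorem score_computable {A : Learner} (hA : Computable₂ fun (S : Sample) (x : ℕ) => A S x) :
    Computable₂ (score A) := by
  have cA : Computable fun x : (Sample × Sample) × ℕ × (ℕ × Bool) => A x.1.1 x.2.2.1 :=
    hA.comp (Computable.fst.comp Computable.fst)
      (Computable.fst.comp (Computable.snd.comp Computable.snd))
  have cy : Computable fun x : (Sample × Sample) × ℕ × (ℕ × Bool) => x.2.2.2 :=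
    Computable.snd.comp (Computable.snd.comp Computable.snd)
  have cbne : Primrec₂ fun a b : Bool => a != b := Primrec.dom_bool₂ _
  have cc : Computable fun x : (Sample × Sample) × ℕ × (ℕ × Bool) =>
      A x.1.1 x.2.2.1 != x.2.2.2 := cbne.to_comp.comp cA cy
  have ck : Computable fun x : (Sample × Sample) × ℕ × (ℕ × Bool) => x.2.1 :=
    Computable.fst.comp Computable.snd
  have hh : Computable₂ fun (a : Sample × Sample) (p : ℕ × (ℕ × Bool)) =>
      p.1 + (bif A a.1 p.2.1 != p.2.2 then 1 else 0) :=
    (Primrec.nat_add.to_comp.comp ck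
      (Computable.cond cc (Computable.const 1) (Computable.const 0))).to₂
  have := comp_foldl (f := fun a : Sample × Sample => a.2)
    (g := fun _ : Sample × Sample => (0 : ℕ)) Computable.snd (Computable.const 0) hh
  have h2 : Computable fun a : Sample × Sample => score A a.1 a.2 :=
    this.of_eq fun a => by
      show List.foldl (fun s b => s + (bif A a.1 b.1 != b.2 then 1 else 0)) 0 a.2 = _
      rw [countP_foldl]; simp [score]
  exact h2.to₂

/-- Pick a tuple minimizing `score` among `tuples S S.length` (default `S`). -/
def best (A : Learner) (S : Sample) : Sample :=
  (tuples S S.length).foldl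
    (fun acc T => if score A T S ≤ score A acc S then T else acc) S

theorem foldl_min {γ : Type*} (f : γ → ℕ) : ∀ (l : List γ) (b : γ),
    f (l.foldl (fun acc T => if f T ≤ f acc then T else acc) b) ≤ f b ∧
    ∀ T ∈ l, f (l.foldl (fun acc T => if f T ≤ f acc then T else acc) b) ≤ f T := by
  intro l
  induction l with
  | nil => intro b; simp
  | cons a l ih =>
    intro b
    simp only [List.foldl_cons]
    rcases ih (if f a ≤ f b then a else b) with ⟨h1, h2⟩
    constructor
    · refine h1.trans ?_
      split <;> omega
    · intro T hT
      rcases List.mem_cons.mp hT with rfl | hT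
      · refine h1.trans ?_
        split <;> omega
      · exact h2 T hT

theorem best_computable {A : Learner} (hA : Computable₂ fun (S : Sample) (x : ℕ) => A S x) :
    Computable (best A) := by
  have hsc := score_computable hA
  have cS : Computable fun x : Sample × (Sample × Sample) => x.1 := Computable.fst
  have cacc : Computable fun x : Sample × (Sample × Sample) => x.2.1 :=
    Computable.fst.comp Computable.snd
  have cT : Computable fun x : Sample × (Sample × Sample) => x.2.2 :=
    Computable.snd.comp Computable.snd
  have cc : Computable fun x : Sample × (Sample × Sample) =>
      decide (score A x.2.2 x.1 ≤ score A x.2.1 x.1) :=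
    Primrec.nat_le.decide.to_comp.comp (hsc.comp cT cS) (hsc.comp cacc cS)
  have hh : Computable₂ fun (S : Sample) (p : Sample × Sample) =>
      if score A p.2 S ≤ score A p.1 S then p.2 else p.1 := by
    have h3 : Computable fun x : Sample × (Sample × Sample) =>
        if score A x.2.2 x.1 ≤ score A x.2.1 x.1 then x.2.2 else x.2.1 :=
      (Computable.cond cc cT cacc).of_eq fun x => by
        by_cases h : score A x.2.2 x.1 ≤ score A x.2.1 x.1 <;> simp [h]
    exact h3.to₂
  have cf : Computable fun S : Sample => tuples S S.length :=
    (tuples_primrec.comp Primrec.id Primrec.list_length).to_comp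
  have := comp_foldl cf Computable.id hh
  exact this.of_eq fun S => rfl

theorem score_best_le {A : Learner} {S T : Sample} (hT : T ∈ tuples S S.length) :
    score A (best A S) S ≤ score A T S :=
  (foldl_min (fun T => score A T S) (tuples S S.length) S).2 T hT

/-! #### Empirical / generalization error bookkeeping -/

theorem empError_eq_score (A : Learner) (T S : Sample) :
    empError S (A T) = (score A T S : ℝ≥0∞) / (S.length : ℝ≥0∞) := rfl

theorem empError_le_one (S : Sample) (h : Hyp) : empError S h ≤ 1 := by
  rcases S with _ | ⟨p, S⟩
  · simp [empError]
  · rw [empError]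
    refine ENNReal.div_le_of_le_mul ?_
    rw [one_mul]
    exact_mod_cast List.countP_le_length

private theorem tsum_count0 {γ : Type} [inst : DecidableEq γ] (t : Multiset γ) :
    ∑' x : γ, ((t.count x : ℕ) : ℝ≥0∞) = (Multiset.card t : ℝ≥0∞) := by
  rw [tsum_eq_sum (s := t.toFinset)
    (fun x hx => by
      have hx' : x ∉ t := fun hmem => hx (Multiset.mem_toFinset.2 hmem)
      simp [Multiset.count_eq_zero.2 hx'])]
  rw [← Nat.cast_sum, Multiset.toFinset_sum_count_eq]

private theorem tsum_count {γ : Type} {inst : DecidableEq γ} (t : Multiset γ) :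
    ∑' x : γ, ((@Multiset.count γ inst x t : ℕ) : ℝ≥0∞) = (Multiset.card t : ℝ≥0∞) :=
  @tsum_count0 γ inst t

theorem genError_ofMultiset (S : Sample) (hS : (↑S : Multiset (ℕ × Bool)) ≠ 0) (h : Hyp) :
    genError (PMF.ofMultiset (↑S) hS) h = empError S h := by
  classical
  rw [genError, PMF.toOuterMeasure_ofMultiset_apply, tsum_count,
    ← Multiset.countP_eq_card_filter, Multiset.coe_countP, Multiset.coe_card]
  rw [empError]
  congr 2
  refine List.countP_congr fun p _ => ?_
  constructor
  · intro hp
    have : h p.1 ≠ p.2 := by simpa using hp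
    simp [bne_iff_ne, this]
  · intro hp
    have : h p.1 ≠ p.2 := by simpa [bne_iff_ne] using hp
    simpa using this

theorem iid_support {D : PMF (ℕ × Bool)} : ∀ {m : ℕ} {T : Sample},
    T ∈ (iidPMF D m).support → T.length = m ∧ ∀ p ∈ T, p ∈ D.support := by
  intro m
  induction m with
  | zero =>
    intro T hT
    rw [iidPMF, PMF.support_pure] at hT
    subst hT
    simp
  | succ m ih =>
    intro T hT
    rw [iidPMF, PMF.support_bind] at hT
    simp only [Set.mem_iUnion, PMF.support_map, Set.mem_image] at hT
    obtain ⟨p, hp, T', hT', rfl⟩ := hT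
    obtain ⟨hl, hmem⟩ := ih hT'
    refine ⟨by simp [hl], ?_⟩
    intro q hq
    rcases List.mem_cons.mp hq with rfl | hq
    · exact hp
    · exact hmem q hq

/-- The key bound: if the PAC condition holds at level `n ≥ 2` for samples of size
`S.length`, then the empirical search achieves empirical error within `n⁻¹` of optimal. -/
theorem main_bound {A : Learner} {H : Set Hyp} {S : Sample} {n : ℕ}
    (hn : 2 ≤ n) (hpac : PACCondition A H n S.length) :
    empError S (A (best A S)) ≤ (⨅ h ∈ H, empError S h) + ((n : ℝ≥0∞))⁻¹ := by
  classical
  rcases eq_or_ne S [] with rfl | hS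
  · simp [empError]
  have hS0 : (↑S : Multiset (ℕ × Bool)) ≠ 0 := by
    simpa [Multiset.coe_eq_zero] using hS
  set D := PMF.ofMultiset ((↑S : Multiset (ℕ × Bool))) hS0 with hD
  have hposn : (0 : ℝ≥0∞) < 1 - ((n : ℝ≥0∞))⁻¹ := by
    rw [tsub_pos_iff_lt]
    refine ENNReal.inv_lt_one.2 ?_
    exact_mod_cast Nat.lt_of_lt_of_le one_lt_two hn
  have hpos : 0 < samplePr D S.length
      {T | genError D (A T) ≤ (⨅ h ∈ H, genError D h) + ((n : ℝ≥0∞))⁻¹} :=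
    lt_of_lt_of_le hposn (hpac D)
  rw [samplePr] at hpos
  have hne : ¬ Disjoint (iidPMF D S.length).support
      {T | genError D (A T) ≤ (⨅ h ∈ H, genError D h) + ((n : ℝ≥0∞))⁻¹} := by
    intro hdisj
    rw [← PMF.toOuterMeasure_apply_eq_zero_iff] at hdisj
    rw [hdisj] at hpos
    exact lt_irrefl _ hpos
  obtain ⟨T, hTsup, hTE⟩ := Set.not_disjoint_iff.mp hne
  obtain ⟨hTlen, hTmem⟩ := iid_support hTsup
  have hTt : T ∈ tuples S S.length := by
    refine mem_tuples hTlen fun p hp => ?_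
    have := hTmem p hp
    rw [hD, PMF.support_ofMultiset] at this
    simpa [Multiset.mem_toFinset] using this
  have hgen : ∀ g : Hyp, genError D g = empError S g := fun g =>
    genError_ofMultiset S hS0 g
  have hTE' : empError S (A T) ≤ (⨅ h ∈ H, empError S h) + ((n : ℝ≥0∞))⁻¹ := by
    have : (⨅ h ∈ H, genError D h) = ⨅ h ∈ H, empError S h :=
      iInf_congr fun h => iInf_congr fun _ => hgen h
    rw [← this, ← hgen (A T)]
    exact hTE
  refine le_trans ?_ hTE'
  rw [empError_eq_score, empError_eq_score]
  exact ENNReal.div_le_div_right (by exact_mod_cast score_best_le hTt) _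

end CpacAux
/-- If `H` is properly CPAC learnable, then `H` has a computable
asymptotic ERM. -/
theorem computable_asymptoticERM_of_properCPAC (H : Set Hyp)
    (hH : ProperlyCPACLearnable H) :
    ∃ A : Learner, ComputableLearner A ∧ IsAsymptoticERM A H := by
  obtain ⟨A, hAc, hProp, hPAC⟩ := hH
  refine ⟨fun S => A (CpacAux.best A S), ?_, ?_, ?_⟩
  · exact hAc.comp ((CpacAux.best_computable hAc).comp Computable.fst) Computable.snd
  · intro S
    exact hProp _
  · refine ⟨fun m => min 1 (⨅ (n : ℕ) (_ : 2 ≤ n ∧ PACCondition A H n m), ((n : ℝ≥0∞))⁻¹),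
      fun m => min_le_left _ _, ?_, ?_⟩
    · rw [ENNReal.tendsto_atTop_zero]
      intro e he
      obtain ⟨n, hn⟩ := ENNReal.exists_inv_nat_lt (ne_of_gt he)
      obtain ⟨m₀, hm₀⟩ := hPAC (max n 2)
      refine ⟨m₀, fun m hm => ?_⟩
      have h1 : ((max n 2 : ℕ) : ℝ≥0∞)⁻¹ ≤ ((n : ℕ) : ℝ≥0∞)⁻¹ :=
        ENNReal.inv_le_inv.mpr (by exact_mod_cast le_max_left n 2)
      refine le_trans (min_le_right _ _) ?_
      refine le_trans (iInf₂_le (max n 2) ⟨le_max_right _ _, hm₀ m hm⟩) ?_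
      exact le_trans h1 hn.le
    · intro S
      show empError S (A (CpacAux.best A S)) ≤ (⨅ h ∈ H, empError S h) +
        min 1 (⨅ (n : ℕ) (_ : 2 ≤ n ∧ PACCondition A H n S.length), ((n : ℝ≥0∞))⁻¹)
      rcases min_cases (1 : ℝ≥0∞)
        (⨅ (n : ℕ) (_ : 2 ≤ n ∧ PACCondition A H n S.length), ((n : ℝ≥0∞))⁻¹) with
        ⟨hmin, _⟩ | ⟨hmin, _⟩ <;> rw [hmin]
      · exact le_trans (CpacAux.empError_le_one S _) le_add_self
      · rw [ENNReal.add_iInf]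
        refine le_iInf fun n => ?_
        rw [ENNReal.add_iInf]
        refine le_iInf fun hn => ?_
        exact CpacAux.main_bound hn.1 hn.2
end

section
/- Let f : ℕ → ℕ be a total computable injective function. Then the hypothesis class 𝓗_f is decidable: there is an algorithm that, given the (finite) support of a finitely supported function h : ℕ → {0,1}, decides whether h ∈ 𝓗_f. -/
open Filter
open scoped ENNReal

namespace HfDec

/-- list of elements of `Iblk k`. -/
def blkList (k : ℕ) : List ℕ := (List.range k).map (fun m => nkj k (m + 1))

/-- list of elements of `Iblk k \ {nkj k (i+1)}`. -/
def blkMinusList (k i : ℕ) : List ℕ :=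
  (List.range (k - 1)).map (fun m => nkj k (if m < i then m + 1 else m + 2))

def memB (x : ℕ) (l : List ℕ) : Bool := l.any (fun y => y == x)
def subB (l₁ l₂ : List ℕ) : Bool := l₁.all (fun x => memB x l₂)
def eqB (l₁ l₂ : List ℕ) : Bool := subB l₁ l₂ && subB l₂ l₁

def checkA (l : List ℕ) : Bool :=
  (List.range (l.length + 2)).any fun k =>
    (List.range k).any fun i => eqB l (blkMinusList k i)

def checkB (f : ℕ → ℕ) (l : List ℕ) : Bool :=
  Option.casesOn (l[l.findIdx fun x => x % 2 == 1]?) false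
    (fun x => eqB l (x :: blkList (f (x / 2))))

/-! ### Semantics -/

theorem memB_iff {x l} : memB x l = true ↔ x ∈ l := by
  simp only [memB, List.any_eq_true, beq_iff_eq]
  constructor
  · rintro ⟨y, hy, rfl⟩; exact hy
  · intro h; exact ⟨x, h, rfl⟩

theorem eqB_iff {l₁ l₂} : eqB l₁ l₂ = true ↔ ∀ x, x ∈ l₁ ↔ x ∈ l₂ := by
  simp only [eqB, subB, Bool.and_eq_true, List.all_eq_true, memB_iff]
  constructor
  · rintro ⟨h1, h2⟩ x; exact ⟨fun h => h1 x h, fun h => h2 x h⟩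
  · intro h; exact ⟨fun x hx => (h x).1 hx, fun x hx => (h x).2 hx⟩

theorem nkj_inj {k} : Function.Injective (nkj k) := by
  intro a b h; simpa [nkj] using h

theorem mem_Iblk {k n} : n ∈ Iblk k ↔ ∃ m < k, n = nkj k (m + 1) := by
  simp only [Iblk, Finset.mem_image, Finset.mem_Icc]
  constructor
  · rintro ⟨j, ⟨h1, h2⟩, rfl⟩
    exact ⟨j - 1, by omega, by congr 1; omega⟩
  · rintro ⟨m, hm, rfl⟩
    exact ⟨m + 1, ⟨by omega, by omega⟩, rfl⟩

theorem mem_blkList {k n} : n ∈ blkList k ↔ n ∈ Iblk k := by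
  simp [blkList, mem_Iblk, List.mem_map, eq_comm]

theorem even_of_mem_Iblk {k n} (h : n ∈ Iblk k) : n % 2 = 0 := by
  rcases mem_Iblk.1 h with ⟨m, _, rfl⟩
  have h2 : 2 ∣ k * (k - 1) := by
    rcases Nat.even_or_odd k with hk | hk
    · exact Dvd.dvd.mul_right hk.two_dvd _
    · rcases hk with ⟨t, ht⟩
      exact Dvd.dvd.mul_left (by omega : 2 ∣ (k - 1)) _
  rcases h2 with ⟨t, ht⟩
  simp only [nkj, ht]
  omega

theorem mem_blkMinusList {k i n} (hi : i < k) :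
    n ∈ blkMinusList k i ↔ n ∈ Iblk k ∧ n ≠ nkj k (i + 1) := by
  simp only [blkMinusList, List.mem_map, List.mem_range, mem_Iblk]
  constructor
  · rintro ⟨m, hm, rfl⟩
    by_cases h : m < i
    · simp only [h, if_true]
      exact ⟨⟨m, by omega, rfl⟩, fun he => by have := nkj_inj he; omega⟩
    · simp only [h, if_false]
      exact ⟨⟨m + 1, by omega, rfl⟩, fun he => by have := nkj_inj he; omega⟩
  · rintro ⟨⟨m, hm, rfl⟩, hne⟩
    have hmne : m ≠ i := fun h => hne (by rw [h])
    by_cases h : m < i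
    · exact ⟨m, by omega, by simp [h]⟩
    · refine ⟨m - 1, by omega, ?_⟩
      have : ¬ (m - 1 < i) := by omega
      simp only [this, if_false]
      congr 1; omega

/-- `blkMinusList k i` is nodup. -/
theorem nodup_blkMinusList {k i} : (blkMinusList k i).Nodup := by
  refine List.nodup_range.map_on ?_
  intro a _ b _ h
  have := nkj_inj h
  split_ifs at this <;> omega

end HfDec

namespace HfDec

/-! ### Computability -/

open Primrec

theorem any_eq_decide {β : Type} (l : List β) (p : β → Bool) :
    l.any p = decide (l.findIdx p < l.length) := by
  rw [Bool.eq_iff_iff]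
  simp [List.any_eq_true, List.findIdx_lt_length]

theorem list_any_primrec {α β : Type} [Primcodable α] [Primcodable β]
    {f : α → List β} {p : α → β → Bool} (hf : Primrec f) (hp : Primrec₂ p) :
    Primrec fun a => (f a).any (p a) := by
  have h : PrimrecPred fun a => (f a).findIdx (p a) < (f a).length :=
    PrimrecRel.comp Primrec.nat_lt (Primrec.list_findIdx hf hp)
      (Primrec.list_length.comp hf)
  exact Primrec.of_eq h.decide fun a => (any_eq_decide _ _).symm

theorem list_all_primrec {α β : Type} [Primcodable α] [Primcodable β]
    {f : α → List β} {p : α → β → Bool} (hf : Primrec f) (hp : Primrec₂ p) :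
    Primrec fun a => (f a).all (p a) := by
  have h := list_any_primrec (p := fun a b => !(p a b)) hf
    ((Primrec.dom_bool (!·)).comp₂ hp)
  have := (Primrec.dom_bool (!·)).comp h
  exact this.of_eq fun a => by simp [List.all_eq_not_any_not]

end HfDec

namespace HfDec

theorem nkj_primrec : Primrec₂ nkj := by
  have h1 : Primrec₂ fun k j => k * (k - 1) + 2 * j :=
    Primrec₂.comp₂ Primrec.nat_add
      (Primrec₂.comp₂ Primrec.nat_mul (Primrec.fst)
        (Primrec.nat_sub.comp₂ Primrec.fst (Primrec₂.const 1)))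
      (Primrec.nat_mul.comp₂ (Primrec₂.const 2) Primrec.snd)
  exact h1

theorem blkList_primrec : Primrec blkList := by
  unfold blkList
  exact Primrec.list_map Primrec.list_range
    (nkj_primrec.comp₂ Primrec₂.left (Primrec.succ.comp₂ Primrec₂.right))

theorem blkMinusList_primrec : Primrec₂ blkMinusList := by
  have hrange : Primrec fun p : ℕ × ℕ => List.range (p.1 - 1) :=
    Primrec.list_range.comp (Primrec.nat_sub.comp Primrec.fst (Primrec.const 1))
  have hinner : Primrec₂ fun (p : ℕ × ℕ) (m : ℕ) =>
      nkj p.1 (if m < p.2 then m + 1 else m + 2) := by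
    refine nkj_primrec.comp₂ ((Primrec.fst.comp Primrec.fst).to₂) ?_
    refine Primrec.ite ?_ ?_ ?_
    · exact PrimrecRel.comp Primrec.nat_lt Primrec.snd (Primrec.snd.comp Primrec.fst)
    · exact Primrec.succ.comp Primrec.snd
    · exact (Primrec.succ.comp Primrec.succ).comp Primrec.snd
  exact (Primrec.list_map hrange hinner).to₂

theorem memB_primrec : Primrec₂ memB :=
  (list_any_primrec (f := fun p : ℕ × List ℕ => p.2)
    (p := fun p y => y == p.1) Primrec.snd
    (Primrec.beq.comp₂ Primrec.snd ((Primrec.fst.comp Primrec.fst).to₂))).to₂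

theorem subB_primrec : Primrec₂ subB :=
  (list_all_primrec (f := fun p : List ℕ × List ℕ => p.1)
    (p := fun p x => memB x p.2) Primrec.fst
    (memB_primrec.comp₂ Primrec.snd ((Primrec.snd.comp Primrec.fst).to₂))).to₂

theorem eqB_primrec : Primrec₂ eqB := by
  unfold eqB
  exact Primrec₂.comp₂ (Primrec.dom_bool₂ (· && ·)) subB_primrec
    (subB_primrec.comp Primrec.snd Primrec.fst).to₂

theorem checkA_primrec : Primrec checkA := by
  have houter : Primrec fun l : List ℕ => List.range (l.length + 2) :=
    Primrec.list_range.comp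
      ((Primrec.nat_add.comp Primrec.id (Primrec.const 2)).comp Primrec.list_length)
  have hinner2 : Primrec₂ fun (q : List ℕ × ℕ) (i : ℕ) => eqB q.1 (blkMinusList q.2 i) :=
    eqB_primrec.comp₂ ((Primrec.fst.comp Primrec.fst).to₂)
      (blkMinusList_primrec.comp₂ ((Primrec.snd.comp Primrec.fst).to₂) Primrec.snd)
  have hinner : Primrec₂ fun (l : List ℕ) (k : ℕ) =>
      (List.range k).any fun i => eqB l (blkMinusList k i) :=
    (list_any_primrec (f := fun q : List ℕ × ℕ => List.range q.2)
      (Primrec.list_range.comp Primrec.snd) hinner2).to₂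
  exact list_any_primrec houter hinner

theorem checkB_computable {f : ℕ → ℕ} (hf : Computable f) : Computable (checkB f) := by
  have hodd : Primrec₂ fun (_ : List ℕ) (x : ℕ) => x % 2 == 1 :=
    Primrec.beq.comp₂ (Primrec.nat_mod.comp₂ Primrec.snd (Primrec₂.const 2))
      (Primrec₂.const 1)
  have ho : Primrec fun l : List ℕ => l[l.findIdx fun x => x % 2 == 1]? :=
    Primrec.list_getElem?.comp Primrec.id (Primrec.list_findIdx Primrec.id hodd)
  have hsome : Computable₂ fun (l : List ℕ) (x : ℕ) => eqB l (x :: blkList (f (x / 2))) := by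
    have hfx : Computable fun p : List ℕ × ℕ => blkList (f (p.2 / 2)) :=
      (blkList_primrec.to_comp).comp (hf.comp
        ((Primrec.nat_div.comp Primrec.snd (Primrec.const 2)).to_comp))
    exact (eqB_primrec.to_comp.comp Computable.fst
      (Primrec.list_cons.to_comp.comp Computable.snd hfx)).to₂
  exact Computable.option_casesOn ho.to_comp (Computable.const false) hsome

theorem decider_computable {f : ℕ → ℕ} (hf : Computable f) :
    Computable fun l => checkA l || checkB f l :=
  (Primrec.dom_bool₂ (· || ·)).to_comp.comp checkA_primrec.to_comp (checkB_computable hf)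

end HfDec



namespace HfDec

theorem checkA_iff {l : List ℕ} :
    checkA l = true ↔ ∃ k j, 1 ≤ j ∧ j ≤ k ∧ listIndicator l = hkj k j := by
  constructor
  · intro hc
    unfold checkA at hc
    rw [List.any_eq_true] at hc
    obtain ⟨k, _, hc⟩ := hc
    rw [List.any_eq_true] at hc
    obtain ⟨i, hi, he⟩ := hc
    rw [List.mem_range] at hi
    refine ⟨k, i + 1, by omega, by omega, ?_⟩
    funext n
    have h1 := eqB_iff.1 he n
    rw [mem_blkMinusList hi] at h1
    simp only [listIndicator, hkj]
    exact decide_eq_decide.2 h1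
  · rintro ⟨k, j, hj1, hjk, hl⟩
    have hchar : ∀ n, n ∈ l ↔ n ∈ blkMinusList k (j - 1) := by
      intro n
      have h1 : listIndicator l n = hkj k j n := by rw [hl]
      simp only [listIndicator, hkj, decide_eq_decide] at h1
      rw [mem_blkMinusList (by omega : j - 1 < k)]
      have hj : j - 1 + 1 = j := by omega
      rw [hj]
      exact h1
    have hsub : (blkMinusList k (j - 1)).toFinset ⊆ l.toFinset := by
      intro x hx
      rw [List.mem_toFinset] at *
      exact (hchar x).2 hx
    have hlen : (blkMinusList k (j - 1)).length = k - 1 := by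
      simp [blkMinusList]
    have hcard : k - 1 ≤ l.length := by
      have h1 : (blkMinusList k (j - 1)).toFinset.card = k - 1 := by
        rw [List.toFinset_card_of_nodup nodup_blkMinusList, hlen]
      have h2 := Finset.card_le_card hsub
      have h3 := l.toFinset_card_le
      omega
    unfold checkA
    rw [List.any_eq_true]
    refine ⟨k, List.mem_range.2 (by omega), ?_⟩
    rw [List.any_eq_true]
    refine ⟨j - 1, List.mem_range.2 (by omega), ?_⟩
    exact eqB_iff.2 hchar

theorem checkB_iff {f : ℕ → ℕ} {l : List ℕ} :
    checkB f l = true ↔ ∃ a, listIndicator l = hA f a := by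
  constructor
  · intro hc
    unfold checkB at hc
    rcases ho : l[l.findIdx fun x => x % 2 == 1]? with _ | x
    · rw [ho] at hc; exact absurd hc (by simp)
    · rw [ho] at hc
      have hc : eqB l (x :: blkList (f (x / 2))) = true := hc
      have hodd0 := List.findIdx_of_getElem?_eq_some (p := fun z => z % 2 == 1) ho
      have hodd : x % 2 = 1 := by simpa using hodd0
      have hx : 2 * (x / 2) + 1 = x := by omega
      refine ⟨x / 2, ?_⟩
      funext n
      simp only [listIndicator, hA]
      refine decide_eq_decide.2 ?_
      have h1 := eqB_iff.1 hc n
      rw [List.mem_cons, mem_blkList] at h1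
      rw [hx]
      tauto
  · rintro ⟨a, hl⟩
    have hchar : ∀ n, n ∈ l ↔ n ∈ Iblk (f a) ∨ n = 2 * a + 1 := by
      intro n
      have h1 : listIndicator l n = hA f a n := by rw [hl]
      simpa only [listIndicator, hA, decide_eq_decide] using h1
    have hmem : 2 * a + 1 ∈ l := (hchar _).2 (Or.inr rfl)
    have hex : ∃ y ∈ l, (y % 2 == 1) = true :=
      ⟨2 * a + 1, hmem, by rw [beq_iff_eq]; omega⟩
    have hlt := List.findIdx_lt_length.2 hex
    set x := l.get ⟨_, hlt⟩ with hxdef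
    have ho : l[l.findIdx fun x => x % 2 == 1]? = some x := List.getElem?_eq_getElem hlt
    have hpx0 := List.findIdx_of_getElem?_eq_some (p := fun z => z % 2 == 1) ho
    have hpx : x % 2 = 1 := by simpa using hpx0
    have hxl : x ∈ l := List.get_mem l _
    have hxe : x = 2 * a + 1 := by
      rcases (hchar x).1 hxl with h | h
      · have := even_of_mem_Iblk h; omega
      · exact h
    have hdiv : x / 2 = a := by omega
    unfold checkB
    rw [ho]
    show eqB l (x :: blkList (f (x / 2))) = true
    rw [hdiv]
    refine eqB_iff.2 fun n => ?_
    rw [List.mem_cons, mem_blkList, hxe]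
    have := hchar n
    tauto

end HfDec

/-- For a total computable injective `f : ℕ → ℕ`, the class `𝓗_f`
is decidable: an algorithm decides, given the (finite) support of a finitely supported
`h`, whether `h ∈ 𝓗_f`. -/
theorem Hf_decidable (f : ℕ → ℕ) (hf : Computable f) (hinj : Function.Injective f) :
    DecidableClass (Hf f) := by
  refine ⟨fun l => HfDec.checkA l || HfDec.checkB f l, HfDec.decider_computable hf, fun l => ?_⟩
  rw [Bool.or_eq_true, HfDec.checkA_iff, HfDec.checkB_iff]
  rfl
end

section
/- Let f : ℕ → ℕ be an injective function. Then the VC dimension of the hypothesis class 𝓗_f is at most 3: no 4 distinct natural numbers are shattered by 𝓗_f. -/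
open Filter
open scoped ENNReal

lemma mem_Iblk {n k : ℕ} : n ∈ Iblk k ↔ ∃ j, 1 ≤ j ∧ j ≤ k ∧ n = k * (k - 1) + 2 * j := by
  simp only [Iblk, nkj, Finset.mem_image, Finset.mem_Icc]
  constructor
  · rintro ⟨j, ⟨h1, h2⟩, rfl⟩; exact ⟨j, h1, h2, rfl⟩
  · rintro ⟨j, h1, h2, rfl⟩; exact ⟨j, ⟨h1, h2⟩, rfl⟩

lemma Iblk_even {n k : ℕ} (h : n ∈ Iblk k) : n % 2 = 0 := by
  obtain ⟨j, hj1, hjk, rfl⟩ := mem_Iblk.mp h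
  have hk : 1 ≤ k := le_trans hj1 hjk
  obtain ⟨m, rfl⟩ : ∃ m, k = m + 1 := ⟨k - 1, by omega⟩
  have : Even (m * (m + 1)) := Nat.even_mul_succ_self m
  obtain ⟨t, ht⟩ := this
  have : (m + 1) * (m + 1 - 1) = m * (m + 1) := by rw [Nat.add_sub_cancel, Nat.mul_comm]
  omega

lemma Iblk_unique {n k k' : ℕ} (h : n ∈ Iblk k) (h' : n ∈ Iblk k') : k = k' := by
  obtain ⟨j, hj1, hjk, rfl⟩ := mem_Iblk.mp h
  obtain ⟨j', hj1', hjk', he⟩ := mem_Iblk.mp h'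
  obtain ⟨m, rfl⟩ : ∃ m, k = m + 1 := ⟨k - 1, by omega⟩
  obtain ⟨m', rfl⟩ : ∃ m', k' = m' + 1 := ⟨k' - 1, by omega⟩
  simp only [Nat.add_sub_cancel] at he
  by_contra hne
  rcases Nat.lt_or_ge m m' with hlt | hge
  · nlinarith
  · have : m' < m := by omega
    nlinarith

lemma hkj_true {k j n : ℕ} : hkj k j n = true ↔ n ∈ Iblk k ∧ n ≠ nkj k j := by
  simp [hkj]

lemma hA_true {f : ℕ → ℕ} {a n : ℕ} : hA f a n = true ↔ n ∈ Iblk (f a) ∨ n = 2 * a + 1 := by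
  simp [hA]

/-- In one hypothesis, at most one odd point is labeled true. -/
lemma odd_unique' {f : ℕ → ℕ} {h : Hyp} (hh : h ∈ Hf f) {n m : ℕ}
    (hn : h n = true) (hm : h m = true) (hno : n % 2 = 1) (hmo : m % 2 = 1) : n = m := by
  rcases hh with ⟨k, j, _, _, rfl⟩ | ⟨a, rfl⟩
  · have := (hkj_true.mp hn).1
    have := Iblk_even this
    omega
  · rcases hA_true.mp hn with hn' | hn'
    · have := Iblk_even hn'; omega
    rcases hA_true.mp hm with hm' | hm'
    · have := Iblk_even hm'; omega
    omega

/-- All true even points of a hypothesis lie in one block. -/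
lemma evens_in_block {f : ℕ → ℕ} {h : Hyp} (hh : h ∈ Hf f) :
    ∃ K, ∀ n, h n = true → n % 2 = 0 → n ∈ Iblk K := by
  rcases hh with ⟨k, j, _, _, rfl⟩ | ⟨a, rfl⟩
  · exact ⟨k, fun n hn _ => (hkj_true.mp hn).1⟩
  · refine ⟨f a, fun n hn hne => ?_⟩
    rcases hA_true.mp hn with hn' | hn'
    · exact hn'
    · omega

/-- Key lemma: no hypothesis is true at `x` and false at two distinct points
of the same block as `x`. -/
lemma key_even {f : ℕ → ℕ} {h : Hyp} (hh : h ∈ Hf f) {K x z w : ℕ}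
    (hx : x ∈ Iblk K) (hz : z ∈ Iblk K) (hw : w ∈ Iblk K) (hzw : z ≠ w)
    (htx : h x = true) (htz : h z = false) (htw : h w = false) : False := by
  rcases hh with ⟨k, j, _, _, rfl⟩ | ⟨a, rfl⟩
  · obtain ⟨hxk, _⟩ := hkj_true.mp htx
    have hkK : k = K := Iblk_unique hxk hx
    subst hkK
    have hz' : z = nkj k j := by
      by_contra hne
      exact absurd (hkj_true.mpr ⟨hz, hne⟩) (by simp [htz])
    have hw' : w = nkj k j := by
      by_contra hne
      exact absurd (hkj_true.mpr ⟨hw, hne⟩) (by simp [htw])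
    exact hzw (hz'.trans hw'.symm)
  · rcases hA_true.mp htx with hx' | hx'
    · have : f a = K := Iblk_unique hx' hx
      have : z ∈ Iblk (f a) := this ▸ hz
      exact absurd (hA_true.mpr (Or.inl this)) (by simp [htz])
    · have := Iblk_even hx; omega

/-- Key lemma with an odd point: no hypothesis is true at an odd point and at an
even point `x` while false at a point of the same block as `x`. -/
lemma key_odd {f : ℕ → ℕ} {h : Hyp} (hh : h ∈ Hf f) {K x z o : ℕ}
    (hx : x ∈ Iblk K) (hz : z ∈ Iblk K) (ho : o % 2 = 1)
    (htx : h x = true) (hto : h o = true) (htz : h z = false) : False := by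
  rcases hh with ⟨k, j, _, _, rfl⟩ | ⟨a, rfl⟩
  · have := Iblk_even (hkj_true.mp hto).1; omega
  · rcases hA_true.mp htx with hx' | hx'
    · have : f a = K := Iblk_unique hx' hx
      have : z ∈ Iblk (f a) := this ▸ hz
      exact absurd (hA_true.mpr (Or.inl this)) (by simp [htz])
    · have := Iblk_even hx; omega

/-- For an injective `f : ℕ → ℕ`, the VC dimension of `𝓗_f` is at
most 3: no 4 distinct natural numbers are shattered by `𝓗_f`. -/
theorem Hf_VCdim_le_three (f : ℕ → ℕ) (hinj : Function.Injective f) :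
    ∀ s : Finset ℕ, s.card = 4 → ¬ Shatters (Hf f) s := by
  intro s hcard hshat
  obtain ⟨h₁, hh₁, ht₁⟩ := hshat (fun _ => true)
  classical
  have hEO : (s.filter (fun n => n % 2 = 0)).card
      + (s.filter (fun n => ¬ n % 2 = 0)).card = 4 := by
    rw [Finset.card_filter_add_card_filter_not]; exact hcard
  have hO1 : (s.filter (fun n => ¬ n % 2 = 0)).card ≤ 1 := by
    by_contra hgt
    push_neg at hgt
    obtain ⟨a, b, ha, hb, hab⟩ := Finset.one_lt_card_iff.mp hgt
    rw [Finset.mem_filter] at ha hb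
    exact hab (odd_unique' hh₁ (ht₁ a ha.1) (ht₁ b hb.1) (by omega) (by omega))
  obtain ⟨K, hK⟩ := evens_in_block hh₁
  have hmemE : ∀ n ∈ s.filter (fun n => n % 2 = 0), n ∈ Iblk K := by
    intro n hn
    rw [Finset.mem_filter] at hn
    exact hK n (ht₁ n hn.1) hn.2
  have hE3 : 2 < (s.filter (fun n => n % 2 = 0)).card := by omega
  rcases Nat.eq_zero_or_pos (s.filter (fun n => ¬ n % 2 = 0)).card with hOz | hOp
  · -- four even points
    obtain ⟨x, z, w, hx, hz, hw, hxz, hxw, hzw⟩ := Finset.two_lt_card_iff.mp hE3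
    obtain ⟨h₂, hh₂, ht₂⟩ := hshat (fun n => decide (n = x))
    have hxs : x ∈ s := (Finset.mem_filter.mp hx).1
    have hzs : z ∈ s := (Finset.mem_filter.mp hz).1
    have hws : w ∈ s := (Finset.mem_filter.mp hw).1
    refine key_even hh₂ (hmemE x hx) (hmemE z hz) (hmemE w hw) hzw ?_ ?_ ?_
    · rw [ht₂ x hxs]; simp
    · rw [ht₂ z hzs]; simp [Ne.symm hxz]
    · rw [ht₂ w hws]; simp [Ne.symm hxw]
  · -- three even points and one odd point
    obtain ⟨o, ho⟩ := Finset.card_pos.mp hOp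
    rw [Finset.mem_filter] at ho
    obtain ⟨x, z, hx, hz, hxz⟩ :=
      Finset.one_lt_card_iff.mp (by omega : 1 < (s.filter (fun n => n % 2 = 0)).card)
    obtain ⟨h₂, hh₂, ht₂⟩ := hshat (fun n => decide (n = x ∨ n = o))
    have hxs : x ∈ s := (Finset.mem_filter.mp hx).1
    have hzs : z ∈ s := (Finset.mem_filter.mp hz).1
    have hzev : z % 2 = 0 := (Finset.mem_filter.mp hz).2
    have hoo : ¬ o % 2 = 0 := ho.2
    refine key_odd hh₂ (hmemE x hx) (hmemE z hz) (by omega : o % 2 = 1) ?_ ?_ ?_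
    · rw [ht₂ x hxs]; simp
    · rw [ht₂ o ho.1]; simp
    · rw [ht₂ z hzs]
      have hzo : z ≠ o := by intro h; omega
      simp [Ne.symm hxz, hzo]
end

section
/- Let f : ℕ → ℕ be a total computable injective function. Then the hypothesis class 𝓗_f has a computable asymptotic ERM; moreover, one can take the error sequence ε_m = 1 / min(f(ℕ) \ f({1,…,m})). -/
open Filter
open scoped ENNReal

namespace HfAux

lemma pair_le_pair {a a' b b' : ℕ} (ha : a ≤ a') (hb : b ≤ b') :
    Nat.pair a b ≤ Nat.pair a' b' := by
  have h1 : Nat.pair a b ≤ Nat.pair a b' := by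
    rcases lt_or_eq_of_le hb with h | rfl
    · exact (Nat.pair_lt_pair_right a h).le
    · exact le_rfl
  refine h1.trans ?_
  rcases lt_or_eq_of_le ha with h | rfl
  · exact (Nat.pair_lt_pair_left b' h).le
  · exact le_rfl

def GB (k x : ℕ) : Bool :=
  (decide (x % 2 = 0) && decide (k * (k - 1) + 2 ≤ x)) && decide (x ≤ k * (k - 1) + 2 * k)

def hkjB (k j x : ℕ) : Bool := GB k x && !(x == k * (k - 1) + 2 * j)

def hAB (f : ℕ → ℕ) (a x : ℕ) : Bool := GB (f a) x || (x == 2 * a + 1)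

def decodeH (f : ℕ → ℕ) (c : ℕ) : Hyp := fun x =>
  cond (c.unpair.1 == 0)
    (hkjB (c.unpair.2.unpair.1 + 1) (c.unpair.2.unpair.2 % (c.unpair.2.unpair.1 + 1) + 1) x)
    (hAB f c.unpair.2 x)

def mism (h : Hyp) : ℕ × Bool → Bool := fun p => h p.1 != p.2

def errN (f : ℕ → ℕ) (S : Sample) (c : ℕ) : ℕ := S.countP (mism (decodeH f c))

def bst (f : ℕ → ℕ) (S : Sample) : ℕ → ℕ
  | 0 => 0
  | n + 1 => if errN f S (n + 1) < errN f S (bst f S n) then n + 1 else bst f S n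

def maxX (S : Sample) : ℕ := S.foldl (fun acc p => max acc p.1) 0

def NB (S : Sample) : ℕ :=
  Nat.pair 0 (Nat.pair (maxX S) (maxX S)) + Nat.pair 1 (max S.length (maxX S))

def learner (f : ℕ → ℕ) : Learner := fun S => decodeH f (bst f S (NB S))

lemma even_mul_pred (k : ℕ) : k * (k - 1) % 2 = 0 := by
  rcases k with _ | n
  · rfl
  · have : Even ((n + 1) * n) := by
      rw [mul_comm]; exact Nat.even_mul_succ_self n
    simpa [Nat.even_iff] using this

lemma mem_Iblk_iff {k x : ℕ} :
    x ∈ Iblk k ↔ x % 2 = 0 ∧ k * (k - 1) + 2 ≤ x ∧ x ≤ k * (k - 1) + 2 * k := by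
  have he := even_mul_pred k
  simp only [Iblk, Finset.mem_image, Finset.mem_Icc, nkj]
  constructor
  · rintro ⟨j, ⟨h1, h2⟩, rfl⟩
    omega
  · rintro ⟨h1, h2, h3⟩
    exact ⟨(x - k * (k - 1)) / 2, by omega, by omega⟩

lemma GB_eq (k x : ℕ) : GB k x = decide (x ∈ Iblk k) := by
  rcases h : decide (x ∈ Iblk k) with _ | _
  · rw [decide_eq_false_iff_not, mem_Iblk_iff] at h
    simp only [GB, Bool.and_eq_false_iff, decide_eq_false_iff_not]
    tauto
  · rw [decide_eq_true_eq, mem_Iblk_iff] at h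
    simp only [GB, Bool.and_eq_true, decide_eq_true_eq]
    tauto

lemma hkjB_eq (k j : ℕ) : hkjB k j = hkj k j := by
  funext x
  apply Bool.coe_iff_coe.mp
  simp only [hkjB, hkj, GB_eq, nkj, Bool.and_eq_true, decide_eq_true_eq,
    Bool.not_eq_true', beq_eq_false_iff_ne, ne_eq]
  exact decide_eq_true_iff.symm

lemma hAB_eq (f : ℕ → ℕ) (a : ℕ) : hAB f a = hA f a := by
  funext x
  apply Bool.coe_iff_coe.mp
  simp only [hAB, hA, GB_eq, Bool.or_eq_true, decide_eq_true_eq, beq_iff_eq]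

lemma decodeH_mem (f : ℕ → ℕ) (c : ℕ) : decodeH f c ∈ Hf f := by
  rcases e : (c.unpair.1 == 0) with _ | _
  · right
    exact ⟨c.unpair.2, by funext x; simp [decodeH, e, ← hAB_eq]⟩
  · left
    refine ⟨c.unpair.2.unpair.1 + 1, c.unpair.2.unpair.2 % (c.unpair.2.unpair.1 + 1) + 1,
      by omega, Nat.succ_le_succ (Nat.le_of_lt_succ (Nat.mod_lt _ (by omega))), ?_⟩
    funext x; simp [decodeH, e, ← hkjB_eq]


lemma bst_le (f : ℕ → ℕ) (S : Sample) : ∀ n, bst f S n ≤ n := by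
  intro n
  induction n with
  | zero => simp [bst]
  | succ n ih =>
    rw [bst]
    split
    · exact le_rfl
    · omega

lemma bst_min (f : ℕ → ℕ) (S : Sample) : ∀ n, ∀ c ≤ n, errN f S (bst f S n) ≤ errN f S c := by
  intro n
  induction n with
  | zero => intro c hc; simp_all [bst]
  | succ n ih =>
    intro c hc
    rw [bst]
    rcases Nat.lt_succ_iff_lt_or_eq.mp (Nat.lt_succ_of_le hc) with h | rfl
    · split
      · exact le_of_lt (lt_of_lt_of_le (by assumption) (ih c (Nat.lt_succ_iff.mp h)))
      · exact ih c (Nat.lt_succ_iff.mp h)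
    · split
      · exact le_rfl
      · omega

lemma le_maxX (S : Sample) : ∀ p ∈ S, p.1 ≤ maxX S := by
  have key : ∀ (l : Sample) (b : ℕ),
      b ≤ l.foldl (fun acc p => max acc p.1) b ∧
        ∀ p ∈ l, p.1 ≤ l.foldl (fun acc p => max acc p.1) b := by
    intro l
    induction l with
    | nil => simp
    | cons q l ih =>
      intro b
      simp only [List.foldl_cons]
      obtain ⟨h1, h2⟩ := ih (max b q.1)
      refine ⟨le_trans (le_max_left _ _) h1, ?_⟩
      intro p hp
      rcases List.mem_cons.mp hp with rfl | hp
      · exact le_trans (le_max_right _ _) h1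
      · exact h2 p hp
  exact (key S 0).2

lemma countP_mono' {α : Type*} {l : List α} {p q : α → Bool}
    (h : ∀ a ∈ l, p a = true → q a = true) : l.countP p ≤ l.countP q := by
  induction l with
  | nil => simp
  | cons x l ih =>
    simp only [List.countP_cons]
    have h1 := h x List.mem_cons_self
    have h2 : l.countP p ≤ l.countP q := ih fun a ha => h a (List.mem_cons_of_mem x ha)
    split <;> split <;> simp_all <;> omega

lemma countP_congr' {α : Type*} {l : List α} {p q : α → Bool}
    (h : ∀ a ∈ l, p a = q a) : l.countP p = l.countP q :=
  le_antisymm (countP_mono' fun a ha hp => (h a ha) ▸ hp)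
    (countP_mono' fun a ha hq => (h a ha).symm ▸ hq)

lemma countP_le_add {α : Type*} {l : List α} {p q r : α → Bool}
    (h : ∀ a ∈ l, p a = true → q a = true ∨ r a = true) :
    l.countP p ≤ l.countP q + l.countP r := by
  induction l with
  | nil => simp
  | cons x l ih =>
    simp only [List.countP_cons]
    have h1 := h x List.mem_cons_self
    have h2 := ih fun a ha => h a (List.mem_cons_of_mem x ha)
    split <;> split <;> split <;> simp_all <;> omega

lemma empError_eq (S : Sample) (h : Hyp) :
    empError S h = ((S.countP (mism h) : ℕ) : ℝ≥0∞) / (S.length : ℝ≥0∞) := rfl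

lemma empError_mono {S : Sample} {h1 h2 : Hyp}
    (hc : S.countP (mism h1) ≤ S.countP (mism h2)) : empError S h1 ≤ empError S h2 :=
  ENNReal.div_le_div_right (by exact_mod_cast hc) _

lemma empError_le_one (S : Sample) (h : Hyp) : empError S h ≤ 1 := by
  rw [empError_eq]
  rcases Nat.eq_zero_or_pos S.length with hm | hm
  · have : S.countP (mism h) = 0 := by
      have := List.countP_le_length (l := S) (p := mism h); omega
    simp [this]
  · refine ENNReal.div_le_of_le_mul ?_
    rw [one_mul]
    exact_mod_cast List.countP_le_length (p := mism h) (l := S)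

lemma decode_code1 (f : ℕ → ℕ) {k j : ℕ} (h1 : 1 ≤ j) (h2 : j ≤ k) :
    decodeH f (Nat.pair 0 (Nat.pair (k - 1) (j - 1))) = hkj k j := by
  have hk : 1 ≤ k := le_trans h1 h2
  have e1 : k - 1 + 1 = k := by omega
  have e2 : (j - 1) % (k - 1 + 1) = j - 1 := Nat.mod_eq_of_lt (by omega)
  have e3 : j - 1 + 1 = j := by omega
  funext x
  simp only [decodeH, Nat.unpair_pair, beq_self_eq_true, cond_true, e1, hkjB_eq]
  rw [Nat.mod_eq_of_lt (by omega : j - 1 < k), e3]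

lemma decode_code2 (f : ℕ → ℕ) (a : ℕ) : decodeH f (Nat.pair 1 a) = hA f a := by
  funext x
  simp only [decodeH, Nat.unpair_pair, hAB_eq]
  rfl

lemma hkj_false {k j x : ℕ} (hx : x < k * (k - 1) + 2) : hkj k j x = false := by
  simp only [hkj, decide_eq_false_iff_not, not_and, mem_Iblk_iff]
  omega

lemma sum_cnt_le (k : ℕ) (S : Sample) :
    ∑ j ∈ Finset.Icc 1 k, S.countP (fun p => p.1 == nkj k j) ≤ S.length := by
  induction S with
  | nil => simp
  | cons q S ih =>
    simp only [List.countP_cons, Finset.sum_add_distrib, List.length_cons]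
    have hle : ∑ j ∈ Finset.Icc 1 k, (if (q.1 == nkj k j) = true then 1 else 0) ≤ 1 := by
      have : ∑ j ∈ Finset.Icc 1 k, (if (q.1 == nkj k j) = true then 1 else 0)
          = ((Finset.Icc 1 k).filter fun j => (q.1 == nkj k j) = true).card := by
        rw [Finset.card_filter]
      rw [this]
      apply Finset.card_le_one.mpr
      intro a ha b hb
      simp only [Finset.mem_filter, beq_iff_eq, nkj] at ha hb
      omega
    omega


lemma cnt_div_le {cnt k m : ℕ} (hk : 1 ≤ k) (h : k * cnt ≤ m) :
    (cnt : ℝ≥0∞) / (m : ℝ≥0∞) ≤ ((k : ℝ≥0∞))⁻¹ := by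
  rcases Nat.eq_zero_or_pos m with rfl | hm
  · have hc : cnt = 0 := by
      rcases Nat.mul_eq_zero.mp (Nat.le_zero.mp h) with h' | h' <;> omega
    simp [hc]
  · have hk0 : (k : ℝ≥0∞) ≠ 0 := Nat.cast_ne_zero.mpr (by omega)
    have hktop : (k : ℝ≥0∞) ≠ ⊤ := ENNReal.natCast_ne_top k
    rw [ENNReal.div_le_iff (Nat.cast_ne_zero.mpr (by omega)) (ENNReal.natCast_ne_top m)]
    have hcast : (k : ℝ≥0∞) * cnt ≤ m := by exact_mod_cast h
    calc (cnt : ℝ≥0∞) = (k : ℝ≥0∞)⁻¹ * ((k : ℝ≥0∞) * cnt) := by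
          rw [← mul_assoc, ENNReal.inv_mul_cancel hk0 hktop, one_mul]
      _ ≤ (k : ℝ≥0∞)⁻¹ * m := mul_le_mul_right hcast _

lemma coverage (f : ℕ → ℕ) (hinj : Function.Injective f) (S : Sample) {h : Hyp}
    (hh : h ∈ Hf f) :
    ∃ c ≤ NB S, empError S (decodeH f c) ≤
      empError S h + ((sInf (Set.range f \ f '' Set.Icc 0 S.length) : ℕ) : ℝ≥0∞)⁻¹ := by
  have hc1 : ∀ k j : ℕ, j ≤ k → k ≤ maxX S + 1 → Nat.pair 0 (Nat.pair (k-1) (j-1)) ≤ NB S := by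
    intro k j hj hk
    refine le_trans (pair_le_pair le_rfl (pair_le_pair (by omega) (by omega))) (Nat.le_add_right _ _)
  have hc2 : ∀ a, a ≤ max S.length (maxX S) → Nat.pair 1 a ≤ NB S := by
    intro a ha
    exact le_trans (pair_le_pair le_rfl ha) (Nat.le_add_left _ _)
  have hdec0 : decodeH f (Nat.pair 0 (Nat.pair (maxX S) (maxX S))) = hkj (maxX S + 1) (maxX S + 1) := by
    have := decode_code1 f (k := maxX S + 1) (j := maxX S + 1) (by omega) le_rfl
    simpa using this
  have hfalse0 : ∀ p ∈ S, hkj (maxX S + 1) (maxX S + 1) p.1 = false := by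
    intro p hp
    have h1 := le_maxX S p hp
    have h2 : maxX S ≤ (maxX S + 1) * maxX S := by
      calc maxX S = 1 * maxX S := (one_mul _).symm
        _ ≤ (maxX S + 1) * maxX S := Nat.mul_le_mul_right _ (by omega)
    exact hkj_false (by simpa using by omega)
  have hall : ∀ g : Hyp, (∀ p ∈ S, g p.1 = false) →
      ∃ c ≤ NB S, empError S (decodeH f c) ≤
        empError S g + ((sInf (Set.range f \ f '' Set.Icc 0 S.length) : ℕ) : ℝ≥0∞)⁻¹ := by
    intro g hg
    refine ⟨Nat.pair 0 (Nat.pair (maxX S) (maxX S)), hc1 (maxX S + 1) (maxX S + 1) le_rfl le_rfl, ?_⟩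
    rw [hdec0]
    have : S.countP (mism (hkj (maxX S + 1) (maxX S + 1))) = S.countP (mism g) := by
      apply countP_congr'
      intro p hp
      unfold mism
      rw [hfalse0 p hp, hg p hp]
    exact le_trans (empError_mono this.le) le_self_add
  rcases hh with ⟨k, j, hj1, hj2, rfl⟩ | ⟨a, rfl⟩
  · by_cases hk : k ≤ maxX S + 1
    · refine ⟨Nat.pair 0 (Nat.pair (k-1) (j-1)), hc1 k j hj2 hk, ?_⟩
      rw [decode_code1 f hj1 hj2]
      exact le_self_add
    · apply hall
      intro p hp
      have h1 := le_maxX S p hp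
      have h2 : k ≤ k * (k - 1) := by
        calc k = k * 1 := (mul_one _).symm
          _ ≤ k * (k - 1) := Nat.mul_le_mul_left _ (by omega)
      exact hkj_false (by omega)
  · by_cases ha : a ≤ max S.length (maxX S)
    · refine ⟨Nat.pair 1 a, hc2 a ha, ?_⟩
      rw [decode_code2]
      exact le_self_add
    · push_neg at ha
      have haM : maxX S < a := lt_of_le_of_lt (le_max_right _ _) ha
      have ham : S.length < a := lt_of_le_of_lt (le_max_left _ _) ha
      have hx2a : ∀ p ∈ S, p.1 ≠ 2 * a + 1 := by
        intro p hp
        have := le_maxX S p hp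
        omega
      by_cases hfa : 1 ≤ f a ∧ f a ≤ maxX S + 1
      · obtain ⟨hfa1, hfa2⟩ := hfa
        obtain ⟨j0, hj0mem, hj0min⟩ := Finset.exists_min_image (Finset.Icc 1 (f a))
          (fun j => S.countP fun p => p.1 == nkj (f a) j) ⟨1, by simp [hfa1]⟩
        rw [Finset.mem_Icc] at hj0mem
        have hkcnt : f a * (S.countP fun p => p.1 == nkj (f a) j0) ≤ S.length := by
          have e1 : ∑ _j ∈ Finset.Icc 1 (f a), (S.countP fun p => p.1 == nkj (f a) j0)
              = f a * (S.countP fun p => p.1 == nkj (f a) j0) := by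
            rw [Finset.sum_const, Nat.card_Icc, smul_eq_mul, Nat.add_sub_cancel]
          calc f a * (S.countP fun p => p.1 == nkj (f a) j0)
              = ∑ _j ∈ Finset.Icc 1 (f a), (S.countP fun p => p.1 == nkj (f a) j0) := e1.symm
            _ ≤ ∑ j ∈ Finset.Icc 1 (f a), S.countP fun p => p.1 == nkj (f a) j :=
                Finset.sum_le_sum fun j hj => hj0min j hj
            _ ≤ S.length := sum_cnt_le _ S
        refine ⟨Nat.pair 0 (Nat.pair (f a - 1) (j0 - 1)), hc1 (f a) j0 hj0mem.2 hfa2, ?_⟩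
        rw [decode_code1 f hj0mem.1 hj0mem.2]
        have hcount : S.countP (mism (hkj (f a) j0)) ≤
            S.countP (mism (hA f a)) + S.countP (fun p => p.1 == nkj (f a) j0) := by
          apply countP_le_add
          intro p hp hmis
          by_cases hpn : p.1 = nkj (f a) j0
          · right; simp [hpn]
          · left
            have heq : hkj (f a) j0 p.1 = hA f a p.1 := by
              apply Bool.coe_iff_coe.mp
              simp only [hkj, hA, decide_eq_true_eq]
              have := hx2a p hp
              tauto
            unfold mism at hmis ⊢
            rw [← heq]
            exact hmis
        have hD : f a ∈ Set.range f \ f '' Set.Icc 0 S.length := by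
          refine ⟨⟨a, rfl⟩, ?_⟩
          rintro ⟨b, hb, hba⟩
          have hb' : b = a := hinj hba
          simp only [Set.mem_Icc] at hb
          omega
        have hsInf : sInf (Set.range f \ f '' Set.Icc 0 S.length) ≤ f a := Nat.sInf_le hD
        calc empError S (hkj (f a) j0)
            ≤ ((S.countP (mism (hA f a)) + S.countP fun p => p.1 == nkj (f a) j0 : ℕ) : ℝ≥0∞)
                / (S.length : ℝ≥0∞) :=
              ENNReal.div_le_div_right (by exact_mod_cast hcount) _
          _ = empError S (hA f a) +
                ((S.countP fun p => p.1 == nkj (f a) j0 : ℕ) : ℝ≥0∞) / (S.length : ℝ≥0∞) := by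
              rw [empError_eq, Nat.cast_add, ENNReal.add_div]
          _ ≤ empError S (hA f a) +
                ((sInf (Set.range f \ f '' Set.Icc 0 S.length) : ℕ) : ℝ≥0∞)⁻¹ := by
              refine add_le_add_right ?_ _
              exact (cnt_div_le hfa1 hkcnt).trans (ENNReal.inv_le_inv' (by exact_mod_cast hsInf))
      · apply hall
        intro p hp
        have h1 := le_maxX S p hp
        have h2 : f a ≤ f a * (f a - 1) ∨ f a = 0 := by
          rcases Nat.eq_zero_or_pos (f a) with h | h
          · right; exact h
          · left
            calc f a = f a * 1 := (mul_one _).symm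
              _ ≤ f a * (f a - 1) := Nat.mul_le_mul_left _ (by omega)
        simp only [hA, decide_eq_false_iff_not, not_or, mem_Iblk_iff]
        refine ⟨?_, hx2a p hp⟩
        rintro ⟨e1, e2, e3⟩
        omega


lemma learner_countP (f : ℕ → ℕ) (S : Sample) :
    S.countP (mism (learner f S)) = errN f S (bst f S (NB S)) := rfl

lemma main_bound (f : ℕ → ℕ) (hinj : Function.Injective f) (S : Sample) :
    empError S (learner f S) ≤ (⨅ h ∈ Hf f, empError S h) +
      ((sInf (Set.range f \ f '' Set.Icc 0 S.length) : ℕ) : ℝ≥0∞)⁻¹ := by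
  have hTne : (Set.range fun h : {h // h ∈ Hf f} => S.countP (mism h.1)).Nonempty := by
    refine ⟨S.countP (mism (hkj 1 1)), ⟨⟨hkj 1 1, Or.inl ⟨1, 1, le_rfl, le_rfl, rfl⟩⟩, rfl⟩⟩
  obtain ⟨⟨h0, h0mem⟩, h0eq⟩ := Nat.sInf_mem hTne
  have hmin : ∀ h ∈ Hf f, S.countP (mism h0) ≤ S.countP (mism h) := by
    intro h hh
    have hmem : S.countP (mism h) ∈
        (Set.range fun h : {h // h ∈ Hf f} => S.countP (mism h.1)) := ⟨⟨h, hh⟩, rfl⟩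
    have h2 := Nat.sInf_le hmem
    have h3 : S.countP (mism h0) = sInf (Set.range fun h : {h // h ∈ Hf f} => S.countP (mism h.1)) := h0eq
    omega
  have hiInf : empError S h0 ≤ ⨅ h ∈ Hf f, empError S h :=
    le_iInf₂ fun h hh => empError_mono (hmin h hh)
  obtain ⟨c, hc, hineq⟩ := coverage f hinj S h0mem
  have hlearn : empError S (learner f S) ≤ empError S (decodeH f c) := by
    apply empError_mono
    rw [learner_countP]
    exact bst_min f S (NB S) c hc
  exact hlearn.trans (hineq.trans (add_le_add_left hiInf _))


/-! ### Computability -/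

def errR (f : ℕ → ℕ) (S : Sample) (c : ℕ) : ℕ → ℕ
  | 0 => 0
  | n + 1 => errR f S c n +
      (Option.casesOn (S[n]?) 0 fun q => cond (decodeH f c q.1 != q.2) 1 0 : ℕ)

lemma errR_eq (f : ℕ → ℕ) (S : Sample) (c : ℕ) :
    ∀ n, errR f S c n = (S.take n).countP (mism (decodeH f c)) := by
  intro n
  induction n with
  | zero => simp [errR]
  | succ n ih =>
    rw [errR, ih]
    have ht : S.take (n + 1) = S.take n ++ (S[n]?).toList := by
      rw [List.take_succ]
    rw [ht, List.countP_append]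
    congr 1
    rcases hg : S[n]? with _ | q
    · simp
    · simp only [Option.toList_some, List.countP_singleton, mism, Bool.cond_eq_ite]
      exact if_congr Iff.rfl rfl rfl

lemma errR_len (f : ℕ → ℕ) (S : Sample) (c : ℕ) : errR f S c S.length = errN f S c := by
  rw [errR_eq, List.take_length]
  rfl

lemma GB_prim : Primrec fun p : ℕ × ℕ => GB p.1 p.2 := by
  have harith1 : Primrec fun p : ℕ × ℕ => p.1 * (p.1 - 1) + 2 :=
    Primrec.nat_add.comp (Primrec.nat_mul.comp Primrec.fst
      (Primrec.nat_sub.comp Primrec.fst (Primrec.const 1))) (Primrec.const 2)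
  have harith2 : Primrec fun p : ℕ × ℕ => p.1 * (p.1 - 1) + 2 * p.1 :=
    Primrec.nat_add.comp (Primrec.nat_mul.comp Primrec.fst
      (Primrec.nat_sub.comp Primrec.fst (Primrec.const 1)))
      (Primrec.nat_mul.comp (Primrec.const 2) Primrec.fst)
  have h1 : Primrec fun p : ℕ × ℕ => decide (p.2 % 2 = 0) :=
    PrimrecPred.decide (Primrec.eq.comp (Primrec.nat_mod.comp Primrec.snd (Primrec.const 2)) (Primrec.const 0))
  have h2 : Primrec fun p : ℕ × ℕ => decide (p.1 * (p.1 - 1) + 2 ≤ p.2) :=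
    PrimrecPred.decide (Primrec.nat_le.comp harith1 Primrec.snd)
  have h3 : Primrec fun p : ℕ × ℕ => decide (p.2 ≤ p.1 * (p.1 - 1) + 2 * p.1) :=
    PrimrecPred.decide (Primrec.nat_le.comp Primrec.snd harith2)
  exact Primrec.and.comp (Primrec.and.comp h1 h2) h3

set_option maxHeartbeats 1000000 in
lemma decodeH_comp {f : ℕ → ℕ} (hf : Computable f) :
    Computable₂ fun c x => decodeH f c x := by
  have hu : Primrec fun a : ℕ × ℕ => a.1.unpair.2.unpair.1 :=
    Primrec.fst.comp (Primrec.unpair.comp (Primrec.snd.comp (Primrec.unpair.comp Primrec.fst)))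
  have hv : Primrec fun a : ℕ × ℕ => a.1.unpair.2.unpair.2 :=
    Primrec.snd.comp (Primrec.unpair.comp (Primrec.snd.comp (Primrec.unpair.comp Primrec.fst)))
  have hx : Primrec fun a : ℕ × ℕ => a.2 := Primrec.snd
  have hcond : Primrec fun a : ℕ × ℕ => (a.1.unpair.1 == 0) :=
    Primrec.beq.comp (Primrec.fst.comp (Primrec.unpair.comp Primrec.fst)) (Primrec.const 0)
  have hk1 : Primrec fun a : ℕ × ℕ => a.1.unpair.2.unpair.1 + 1 := Primrec.succ.comp hu
  have hj1 : Primrec fun a : ℕ × ℕ =>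
      a.1.unpair.2.unpair.2 % (a.1.unpair.2.unpair.1 + 1) + 1 :=
    Primrec.succ.comp (Primrec.nat_mod.comp hv hk1)
  have harith : Primrec fun a : ℕ × ℕ =>
      (a.1.unpair.2.unpair.1 + 1) * ((a.1.unpair.2.unpair.1 + 1) - 1) +
        2 * (a.1.unpair.2.unpair.2 % (a.1.unpair.2.unpair.1 + 1) + 1) :=
    Primrec.nat_add.comp (Primrec.nat_mul.comp hk1 (Primrec.nat_sub.comp hk1 (Primrec.const 1)))
      (Primrec.nat_mul.comp (Primrec.const 2) hj1)
  have hb1 : Primrec fun a : ℕ × ℕ =>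
      hkjB (a.1.unpair.2.unpair.1 + 1) (a.1.unpair.2.unpair.2 % (a.1.unpair.2.unpair.1 + 1) + 1)
        a.2 :=
    Primrec.and.comp (GB_prim.comp (hk1.pair hx))
      (Primrec.not.comp (Primrec.beq.comp hx harith))
  have hc2 : Computable fun a : ℕ × ℕ => f a.1.unpair.2 :=
    hf.comp (Primrec.snd.comp (Primrec.unpair.comp Primrec.fst)).to_comp
  have hGB2 : Computable₂ GB := GB_prim.to_comp
  have hGBc : Computable fun a : ℕ × ℕ => GB (f a.1.unpair.2) a.2 :=
    hGB2.comp hc2 hx.to_comp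
  have hbeq2 : Computable fun a : ℕ × ℕ => (a.2 == 2 * a.1.unpair.2 + 1) :=
    (Primrec.beq.comp hx (Primrec.succ.comp (Primrec.nat_mul.comp (Primrec.const 2)
      (Primrec.snd.comp (Primrec.unpair.comp Primrec.fst))))).to_comp
  have hb2 : Computable fun a : ℕ × ℕ => hAB f a.1.unpair.2 a.2 :=
    (Primrec.or.to_comp : Computable₂ _).comp hGBc hbeq2
  have goal : Computable fun a : ℕ × ℕ =>
      cond (a.1.unpair.1 == 0)
        (hkjB (a.1.unpair.2.unpair.1 + 1)
          (a.1.unpair.2.unpair.2 % (a.1.unpair.2.unpair.1 + 1) + 1) a.2)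
        (hAB f a.1.unpair.2 a.2) :=
    Computable.cond hcond.to_comp hb1.to_comp hb2
  exact goal.of_eq fun a => by simp only [decodeH]

lemma errN_comp {f : ℕ → ℕ} (hf : Computable f) : Computable₂ (errN f) := by
  have hdec := decodeH_comp hf
  have hbne : Computable fun u : ((Sample × ℕ) × ℕ × ℕ) × ℕ × Bool =>
      (decodeH f u.1.1.2 u.2.1 != u.2.2) :=
    Primrec.not.to_comp.comp (Primrec.beq.to_comp.comp
      (hdec.comp (Computable.snd.comp (Computable.fst.comp Computable.fst))
        (Computable.fst.comp Computable.snd))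
      (Computable.snd.comp Computable.snd))
  have hg : Computable₂ fun (t : (Sample × ℕ) × ℕ × ℕ) (q : ℕ × Bool) =>
      (cond (decodeH f t.1.2 q.1 != q.2) 1 0 : ℕ) :=
    Computable.cond hbne (Computable.const 1) (Computable.const 0)
  have ho : Computable fun t : (Sample × ℕ) × ℕ × ℕ => t.1.1[t.2.1]? :=
    Computable.list_getElem?.comp (Computable.fst.comp Computable.fst)
      (Computable.fst.comp Computable.snd)
  have hopt : Computable fun t : (Sample × ℕ) × ℕ × ℕ =>
      (Option.casesOn (t.1.1[t.2.1]?) 0 fun q => cond (decodeH f t.1.2 q.1 != q.2) 1 0 : ℕ) :=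
    Computable.option_casesOn ho (Computable.const 0) hg
  have hH : Computable₂ fun (a : Sample × ℕ) (p : ℕ × ℕ) =>
      (p.2 + Option.casesOn (a.1[p.1]?) 0 fun q => cond (decodeH f a.2 q.1 != q.2) 1 0 : ℕ) :=
    Primrec.nat_add.to_comp.comp (Computable.snd.comp Computable.snd) hopt
  have hF : Computable fun a : Sample × ℕ => a.1.length :=
    Primrec.list_length.to_comp.comp Computable.fst
  have := Computable.nat_rec hF (Computable.const 0) hH
  refine this.of_eq fun a => ?_
  have hrec : ∀ n, (Nat.rec 0 (fun y IH =>
      (IH + Option.casesOn (a.1[y]?) 0 fun q => cond (decodeH f a.2 q.1 != q.2) 1 0 : ℕ)) n : ℕ)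
      = errR f a.1 a.2 n := by
    intro n
    induction n with
    | zero => rfl
    | succ n ih => rw [errR, ← ih]
  exact (hrec a.1.length).trans (errR_len f a.1 a.2)

lemma maxX_prim : Primrec maxX := by
  have hstep : Primrec₂ fun (_ : Sample) (p : ℕ × (ℕ × Bool)) => max p.1 p.2.1 :=
    Primrec.nat_max.comp (Primrec.fst.comp Primrec.snd)
      (Primrec.fst.comp (Primrec.snd.comp Primrec.snd))
  exact Primrec.list_foldl Primrec.id (Primrec.const 0) hstep

lemma NB_prim : Primrec NB :=
  Primrec.nat_add.comp
    (Primrec₂.natPair.comp (Primrec.const 0) (Primrec₂.natPair.comp maxX_prim maxX_prim))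
    (Primrec₂.natPair.comp (Primrec.const 1)
      (Primrec.nat_max.comp Primrec.list_length maxX_prim))

lemma bst_comp {f : ℕ → ℕ} (hf : Computable f) :
    Computable fun S : Sample => bst f S (NB S) := by
  have hErr := errN_comp hf
  have hlt : Computable fun t : Sample × ℕ × ℕ =>
      decide (errN f t.1 (t.2.1 + 1) < errN f t.1 t.2.2) :=
    Primrec.nat_lt.decide.to_comp.comp
      (hErr.comp Computable.fst
        (Primrec.succ.to_comp.comp (Computable.fst.comp Computable.snd)))
      (hErr.comp Computable.fst (Computable.snd.comp Computable.snd))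
  have hthen : Computable fun t : Sample × ℕ × ℕ => t.2.1 + 1 :=
    Primrec.succ.to_comp.comp (Computable.fst.comp Computable.snd)
  have hH : Computable₂ fun (S : Sample) (p : ℕ × ℕ) =>
      if errN f S (p.1 + 1) < errN f S p.2 then p.1 + 1 else p.2 :=
    (Computable.cond hlt hthen (Computable.snd.comp Computable.snd)).of_eq fun t => by
      rw [Bool.cond_decide]
  have := Computable.nat_rec NB_prim.to_comp (Computable.const 0) hH
  refine this.of_eq fun S => ?_
  generalize NB S = n
  induction n with
  | zero => rfl
  | succ n ih => simp only [bst, ← ih]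

lemma learner_comp {f : ℕ → ℕ} (hf : Computable f) :
    Computable₂ fun (S : Sample) (x : ℕ) => learner f S x :=
  (decodeH_comp hf).comp ((bst_comp hf).comp Computable.fst) Computable.snd

end HfAux

/-- For a total computable injective `f : ℕ → ℕ`, the class `𝓗_f`
has a computable asymptotic ERM; moreover, one can take the error sequence
`ε_m = 1 / min (f(ℕ) \ f({1,…,m}))`. -/


theorem Hf_computable_asymptoticERM (f : ℕ → ℕ) (hf : Computable f)
    (hinj : Function.Injective f) :
    ∃ A : Learner, ComputableLearner A ∧ IsAsymptoticERM A (Hf f) ∧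
      ∀ S : Sample, empError S (A S) ≤ (⨅ h ∈ Hf f, empError S h) +
        ((sInf (Set.range f \ f '' Set.Icc 1 S.length) : ℕ) : ℝ≥0∞)⁻¹ := by
  have hEne : ∀ m : ℕ, (Set.range f \ f '' Set.Icc 0 m).Nonempty := by
    intro m
    refine ⟨f (m + 1), ⟨m + 1, rfl⟩, ?_⟩
    rintro ⟨b, hb, hba⟩
    have hb' := hinj hba
    simp only [Set.mem_Icc] at hb
    omega
  refine ⟨HfAux.learner f, HfAux.learner_comp hf, ⟨fun S => HfAux.decodeH_mem f _, ?_⟩, ?_⟩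
  · refine ⟨fun m => min 1 ((sInf (Set.range f \ f '' Set.Icc 0 m) : ℕ) : ℝ≥0∞)⁻¹,
      fun m => min_le_left _ _, ?_, ?_⟩
    · rw [ENNReal.tendsto_atTop_zero]
      intro ε hε
      rcases le_or_gt 1 ε with h1 | h1
      · exact ⟨0, fun m _ => (min_le_left _ _).trans h1⟩
      · have hεtop : ε⁻¹ ≠ ⊤ := ENNReal.inv_ne_top.mpr (ne_of_gt hε)
        obtain ⟨K, hK⟩ := ENNReal.exists_nat_gt hεtop
        have hfin : (f ⁻¹' Set.Iio K).Finite :=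
          Set.Finite.preimage hinj.injOn (Set.finite_Iio K)
        obtain ⟨m0, hm0⟩ := hfin.bddAbove
        refine ⟨m0 + 1, fun m hm => ?_⟩
        have hKle : K ≤ sInf (Set.range f \ f '' Set.Icc 0 m) := by
          obtain ⟨⟨a, ha⟩, hnot⟩ := Nat.sInf_mem (hEne m)
          rw [← ha]
          by_contra hlt
          push_neg at hlt
          have hpre : a ∈ f ⁻¹' Set.Iio K := hlt
          have ham : a ≤ m0 := hm0 hpre
          exact hnot ⟨a, Set.mem_Icc.mpr ⟨Nat.zero_le a, by omega⟩, ha⟩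
        calc min 1 ((sInf (Set.range f \ f '' Set.Icc 0 m) : ℕ) : ℝ≥0∞)⁻¹
            ≤ ((sInf (Set.range f \ f '' Set.Icc 0 m) : ℕ) : ℝ≥0∞)⁻¹ := min_le_right _ _
          _ ≤ ((K : ℕ) : ℝ≥0∞)⁻¹ := ENNReal.inv_le_inv' (by exact_mod_cast hKle)
          _ ≤ ε := by
              have := ENNReal.inv_le_inv' hK.le
              rwa [inv_inv] at this
    · intro S
      show empError S (HfAux.learner f S) ≤ (⨅ h ∈ Hf f, empError S h) +
        min 1 ((sInf (Set.range f \ f '' Set.Icc 0 S.length) : ℕ) : ℝ≥0∞)⁻¹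
      rcases le_total ((sInf (Set.range f \ f '' Set.Icc 0 S.length) : ℕ) : ℝ≥0∞)⁻¹ 1 with
        hle | hle
      · rw [min_eq_right hle]
        exact HfAux.main_bound f hinj S
      · rw [min_eq_left hle]
        exact (HfAux.empError_le_one S _).trans le_add_self
  · intro S
    refine (HfAux.main_bound f hinj S).trans (add_le_add_right ?_ _)
    apply ENNReal.inv_le_inv'
    have hsub : Set.range f \ f '' Set.Icc 0 S.length ⊆
        Set.range f \ f '' Set.Icc 1 S.length :=
      Set.diff_subset_diff_right (Set.image_mono (Set.Icc_subset_Icc_left (Nat.zero_le 1)))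
    exact_mod_cast Nat.sInf_le (hsub (Nat.sInf_mem (hEne S.length)))
end

section
/- Let f : ℕ → ℕ be a total computable injective function. If the hypothesis class 𝓗_f has a computable ERM, then the range f(ℕ) is a decidable subset of ℕ. Consequently, if f(ℕ) is undecidable, 𝓗_f is not properly SCPAC learnable. -/
open Filter
open scoped ENNReal

lemma nkj_inj {k j j' : ℕ} (h : nkj k j = nkj k j') : j = j' := by
  unfold nkj at h; omega
lemma nkj_mem_Iblk {k j : ℕ} (h1 : 1 ≤ j) (h2 : j ≤ k) : nkj k j ∈ Iblk k :=
  Finset.mem_image.mpr ⟨j, Finset.mem_Icc.mpr ⟨h1, h2⟩, rfl⟩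

lemma mem_Iblk_iff {k x : ℕ} : x ∈ Iblk k ↔ ∃ j, 1 ≤ j ∧ j ≤ k ∧ x = nkj k j := by
  simp [Iblk, Finset.mem_image, Finset.mem_Icc, eq_comm, and_assoc]

lemma nkj_le {k j : ℕ} (hjk : j ≤ k) : nkj k j ≤ k * (k + 1) := by
  cases k with
  | zero => interval_cases j; simp [nkj]
  | succ m =>
    unfold nkj
    simp only [Nat.add_sub_cancel]
    nlinarith

lemma nkj_lt {k j k' j' : ℕ} (hjk : j ≤ k) (h1 : 1 ≤ j') (hkk : k < k') :
    nkj k j < nkj k' j' := by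
  obtain ⟨m, rfl⟩ : ∃ m, k' = m + 1 := ⟨k' - 1, by omega⟩
  have h2 : k * (k + 1) < (m + 1) * m + 2 * j' := by
    have : k * (k + 1) ≤ m * (m + 1) := Nat.mul_le_mul (by omega) (by omega)
    have hc : m * (m + 1) = (m + 1) * m := Nat.mul_comm _ _
    omega
  calc nkj k j ≤ k * (k + 1) := nkj_le hjk
    _ < (m + 1) * m + 2 * j' := h2
    _ = nkj (m + 1) j' := by simp [nkj]

lemma nkj_eq_nkj {k j k' j' : ℕ} (hj1 : 1 ≤ j) (hjk : j ≤ k) (hj1' : 1 ≤ j') (hjk' : j' ≤ k')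
    (h : nkj k j = nkj k' j') : k = k' ∧ j = j' := by
  rcases lt_trichotomy k k' with hlt | rfl | hlt
  · exact absurd h (Nat.ne_of_lt (nkj_lt hjk hj1' hlt))
  · refine ⟨rfl, ?_⟩
    unfold nkj at h; omega
  · exact absurd h.symm (Nat.ne_of_lt (nkj_lt hjk' hj1 hlt))

lemma nkj_not_mem_Iblk {k j k' : ℕ} (hj1 : 1 ≤ j) (hjk : j ≤ k) (hne : k ≠ k') :
    nkj k j ∉ Iblk k' := by
  intro hmem
  obtain ⟨j', hj1', hjk', he⟩ := mem_Iblk_iff.mp hmem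
  exact hne (nkj_eq_nkj hj1 hjk hj1' hjk' he).1

lemma nkj_even {k j : ℕ} : ∃ c, nkj k j = 2 * c := by
  rcases Nat.even_mul_pred_self k with ⟨c, hc⟩
  exact ⟨c + j, by unfold nkj; omega⟩

lemma nkj_ne_odd {k j a : ℕ} : nkj k j ≠ 2 * a + 1 := by
  obtain ⟨c, hc⟩ := nkj_even (k := k) (j := j); omega

lemma hA_mem {f : ℕ → ℕ} (a : ℕ) : hA f a ∈ Hf f := Or.inr ⟨a, rfl⟩

lemma hA_nkj {f : ℕ → ℕ} {a k j : ℕ} (hak : f a = k) (h1 : 1 ≤ j) (h2 : j ≤ k) :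
    hA f a (nkj k j) = true := by
  simp [hA, hak, nkj_mem_Iblk h1 h2]

lemma miss {f : ℕ → ℕ} {k : ℕ} (hk : 1 ≤ k) (hkr : k ∉ Set.range f) {h : Hyp}
    (hh : h ∈ Hf f) : ∃ j, 1 ≤ j ∧ j ≤ k ∧ h (nkj k j) = false := by
  rcases hh with ⟨k', j', hj1', hjk', rfl⟩ | ⟨a, rfl⟩
  · by_cases hkk : k' = k
    · subst hkk
      exact ⟨j', hj1', hjk', by simp [hkj]⟩
    · refine ⟨1, le_refl 1, hk, ?_⟩
      simp [hkj, nkj_not_mem_Iblk (le_refl 1) hk (Ne.symm hkk)]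
  · have hfa : f a ≠ k := fun he => hkr ⟨a, he⟩
    refine ⟨1, le_refl 1, hk, ?_⟩
    simp [hA, nkj_not_mem_Iblk (le_refl 1) hk (Ne.symm hfa), nkj_ne_odd]

def bAll (q : ℕ → Bool) : ℕ → Bool
  | 0 => true
  | n + 1 => bAll q n && q n

def bEx (q : ℕ → Bool) : ℕ → Bool
  | 0 => false
  | n + 1 => bEx q n || q n

lemma bAll_eq_true {q : ℕ → Bool} {n : ℕ} : bAll q n = true ↔ ∀ i < n, q i = true := by
  induction n with
  | zero => simp [bAll]
  | succ n ih =>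
    simp only [bAll, Bool.and_eq_true, ih]
    constructor
    · rintro ⟨h1, h2⟩ i hi
      rcases Nat.lt_succ_iff_lt_or_eq.mp hi with h | rfl
      exacts [h1 i h, h2]
    · intro h
      exact ⟨fun i hi => h i (Nat.lt_succ_of_lt hi), h n (Nat.lt_succ_self n)⟩

lemma bEx_eq_true {q : ℕ → Bool} {n : ℕ} : bEx q n = true ↔ ∃ i < n, q i = true := by
  induction n with
  | zero => simp [bEx]
  | succ n ih =>
    simp only [bEx, Bool.or_eq_true, ih]
    constructor
    · rintro (⟨i, hi, h⟩ | h)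
      exacts [⟨i, Nat.lt_succ_of_lt hi, h⟩, ⟨n, Nat.lt_succ_self n, h⟩]
    · rintro ⟨i, hi, h⟩
      rcases Nat.lt_succ_iff_lt_or_eq.mp hi with h' | rfl
      exacts [Or.inl ⟨i, h', h⟩, Or.inr h]

lemma bAll_eq_rec (q : ℕ → Bool) (n : ℕ) :
    bAll q n = Nat.rec (motive := fun _ => Bool) true (fun j IH => IH && q j) n := by
  induction n with
  | zero => rfl
  | succ n ih => simp [bAll, ih]

lemma bEx_eq_rec (q : ℕ → Bool) (n : ℕ) :
    bEx q n = Nat.rec (motive := fun _ => Bool) false (fun j IH => IH || q j) n := by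
  induction n with
  | zero => rfl
  | succ n ih => simp [bEx, ih]

lemma computable_bAll {α : Type} [Primcodable α] {q : α → ℕ → Bool} {n : α → ℕ}
    (hq : Computable₂ q) (hn : Computable n) : Computable fun a => bAll (q a) (n a) := by
  have h : Computable₂ fun (a : α) (p : ℕ × Bool) => p.2 && q a p.1 :=
    Primrec.and.to_comp.comp (Computable.snd.comp Computable.snd)
      (hq.comp Computable.fst (Computable.fst.comp Computable.snd))
  exact (Computable.nat_rec hn (Computable.const true) h).of_eq fun a =>
    (bAll_eq_rec _ _).symm

lemma computable_bEx {α : Type} [Primcodable α] {q : α → ℕ → Bool} {n : α → ℕ}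
    (hq : Computable₂ q) (hn : Computable n) : Computable fun a => bEx (q a) (n a) := by
  have h : Computable₂ fun (a : α) (p : ℕ × Bool) => p.2 || q a p.1 :=
    Primrec.or.to_comp.comp (Computable.snd.comp Computable.snd)
      (hq.comp Computable.fst (Computable.fst.comp Computable.snd))
  exact (Computable.nat_rec hn (Computable.const false) h).of_eq fun a =>
    (bEx_eq_rec _ _).symm

def tuples {α : Type} : ℕ → List α → List (List α)
  | 0, _ => [[]]
  | n + 1, L => (tuples n L).flatMap fun t => L.map fun a => a :: t

lemma mem_tuples {α : Type} {n : ℕ} {L : List α} {t : List α} :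
    t ∈ tuples n L ↔ t.length = n ∧ ∀ x ∈ t, x ∈ L := by
  induction n generalizing t with
  | zero =>
    simp only [tuples, List.mem_singleton, List.length_eq_zero_iff]
    constructor
    · rintro rfl; simp
    · rintro ⟨rfl, -⟩; rfl
  | succ n ih =>
    simp only [tuples, List.mem_flatMap, List.mem_map]
    constructor
    · rintro ⟨t', ht', a, ha, rfl⟩
      obtain ⟨hl, hm⟩ := ih.mp ht'
      refine ⟨by simp [hl], ?_⟩
      intro x hx
      rcases List.mem_cons.mp hx with rfl | hx
      exacts [ha, hm x hx]
    · rintro ⟨hl, hm⟩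
      cases t with
      | nil => simp at hl
      | cons a t' =>
        refine ⟨t', ih.mpr ⟨by simpa using hl, fun x hx => hm x (List.mem_cons_of_mem _ hx)⟩,
          a, hm a List.mem_cons_self, rfl⟩

lemma tuples_eq_rec {α : Type} (n : ℕ) (L : List α) :
    tuples n L = Nat.rec (motive := fun _ => List (List α)) [[]]
      (fun _ IH => IH.flatMap fun t => L.map fun a => a :: t) n := by
  induction n with
  | zero => rfl
  | succ n ih => simp [tuples, ih]

lemma primrec_tuples {α : Type} [Primcodable α] :
    Primrec₂ fun (L : List α) (n : ℕ) => tuples n L := by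
  have inner : Primrec fun p : ((List α × ℕ) × (ℕ × List (List α))) × List α =>
      p.1.1.1.map fun a => a :: p.2 := by
    apply Primrec.list_map (Primrec.fst.comp (Primrec.fst.comp Primrec.fst))
    exact (Primrec.list_cons.comp Primrec.snd (Primrec.snd.comp Primrec.fst)).to₂
  have hbody : Primrec fun x : (List α × ℕ) × (ℕ × List (List α)) =>
      x.2.2.flatMap fun t => x.1.1.map fun a => a :: t := by
    apply Primrec.list_flatMap (Primrec.snd.comp Primrec.snd)
    exact inner.to₂
  have main : Primrec fun p : List α × ℕ =>
      Nat.rec (motive := fun _ => List (List α)) [[]]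
        (fun _ IH => IH.flatMap fun t => p.1.map fun a => a :: t) p.2 := by
    exact Primrec.nat_rec' Primrec.snd (Primrec.const [[]]) hbody.to₂
  exact main.of_eq fun p => (tuples_eq_rec _ _).symm

/-- The canonical all-positive sample on block `k`. -/
def Sk (k : ℕ) : Sample := (List.range k).map fun j => (nkj k (j + 1), true)

lemma mem_Sk {k : ℕ} {p : ℕ × Bool} : p ∈ Sk k ↔ ∃ j, 1 ≤ j ∧ j ≤ k ∧ p = (nkj k j, true) := by
  simp only [Sk, List.mem_map, List.mem_range]
  constructor
  · rintro ⟨j, hj, rfl⟩; exact ⟨j + 1, by omega, by omega, rfl⟩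
  · rintro ⟨j, h1, h2, rfl⟩; exact ⟨j - 1, by omega, by rw [Nat.sub_add_cancel h1]⟩

lemma length_Sk (k : ℕ) : (Sk k).length = k := by simp [Sk]

lemma primrec_nkj : Primrec₂ nkj := by
  unfold nkj
  exact Primrec.nat_add.comp
    (Primrec.nat_mul.comp Primrec.fst (Primrec.nat_sub.comp Primrec.fst (Primrec.const 1)))
    (Primrec.nat_mul.comp (Primrec.const 2) Primrec.snd)

lemma primrec_Sk : Primrec Sk := by
  unfold Sk
  apply Primrec.list_map Primrec.list_range
  exact (Primrec.pair (primrec_nkj.comp Primrec.fst (Primrec.succ.comp Primrec.snd))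
    (Primrec.const true)).to₂

/-- empError is zero iff all points are correctly classified (nonempty sample). -/
lemma empError_eq_zero {S : Sample} {h : Hyp} (hS : S ≠ []) :
    empError S h = 0 ↔ ∀ p ∈ S, h p.1 = p.2 := by
  unfold empError
  rw [ENNReal.div_eq_zero_iff]
  simp only [ENNReal.natCast_ne_top, or_false, Nat.cast_eq_zero]
  rw [List.countP_eq_zero]
  constructor
  · intro hc p hp
    have := hc p hp
    simpa using this
  · intro hc p hp
    simpa using hc p hp

lemma part1_correct {f : ℕ → ℕ} {A : Learner} (hERM : IsERM A (Hf f)) {k : ℕ} (hk : 1 ≤ k) :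
    (bAll (fun j => A (Sk k) (nkj k (j + 1))) k = true) ↔ k ∈ Set.range f := by
  have hSne : Sk k ≠ [] := by
    intro h
    have := length_Sk k
    rw [h] at this
    simp at this
    omega
  constructor
  · intro hb
    by_contra hkr
    obtain ⟨j, h1, h2, hfalse⟩ := miss hk hkr (hERM (Sk k)).1
    have := bAll_eq_true.mp hb (j - 1) (by omega)
    rw [Nat.sub_add_cancel h1] at this
    rw [hfalse] at this
    exact Bool.false_ne_true this
  · rintro ⟨a, hak⟩
    have h0 : empError (Sk k) (hA f a) = 0 := by
      rw [empError_eq_zero hSne]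
      intro p hp
      obtain ⟨j, h1, h2, rfl⟩ := mem_Sk.mp hp
      exact hA_nkj hak h1 h2
    have hle : empError (Sk k) (A (Sk k)) = 0 :=
      le_antisymm (h0 ▸ (hERM (Sk k)).2 _ (hA_mem a)) zero_le
    have hall := (empError_eq_zero hSne).mp hle
    apply bAll_eq_true.mpr
    intro i hi
    exact hall (nkj k (i + 1), true) (mem_Sk.mpr ⟨i + 1, by omega, by omega, rfl⟩)

/-- Helper: a computable function correct on positives yields decidability. -/
lemma pred_of_tail {f : ℕ → ℕ} {β : ℕ → Bool} (hβ : Computable β)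
    (h : ∀ k, 1 ≤ k → (β k = true ↔ k ∈ Set.range f)) :
    ComputablePred fun n => n ∈ Set.range f := by
  classical
  apply ComputablePred.computable_iff.mpr
  refine ⟨fun n => Nat.casesOn n (decide (0 ∈ Set.range f)) (fun m => β (m + 1)), ?_, ?_⟩
  · exact Computable.nat_casesOn Computable.id
      (Computable.const (decide (0 ∈ Set.range f)))
      ((hβ.comp (Computable.succ.comp Computable.snd)).to₂)
  · funext n
    cases n with
    | zero => simp
    | succ m => simpa using (propext (h (m + 1) (by omega))).symm

lemma part1 {f : ℕ → ℕ} (hex : ∃ A : Learner, ComputableLearner A ∧ IsERM A (Hf f)) :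
    ComputablePred fun n => n ∈ Set.range f := by
  obtain ⟨A, hAc, hERM⟩ := hex
  apply pred_of_tail (β := fun k => bAll (fun j => A (Sk k) (nkj k (j + 1))) k)
  · apply computable_bAll (n := fun k => k) _ Computable.id
    exact hAc.comp (primrec_Sk.to_comp.comp Computable.fst)
      (primrec_nkj.to_comp.comp Computable.fst (Computable.succ.comp Computable.snd))
  · intro k hk
    exact part1_correct hERM hk

lemma mem_support_iid {D : PMF (ℕ × Bool)} :
    ∀ {m : ℕ} {S : Sample}, S ∈ (iidPMF D m).support →
      S.length = m ∧ ∀ p ∈ S, p ∈ D.support := by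
  intro m
  induction m with
  | zero =>
    intro S hS
    rw [iidPMF, PMF.support_pure] at hS
    subst hS
    simp
  | succ m ih =>
    intro S hS
    rw [iidPMF, PMF.mem_support_bind_iff] at hS
    obtain ⟨p, hp, hS⟩ := hS
    rw [PMF.mem_support_map_iff] at hS
    obtain ⟨t, ht, rfl⟩ := hS
    obtain ⟨hl, hm⟩ := ih ht
    refine ⟨by simp [hl], ?_⟩
    intro q hq
    rcases List.mem_cons.mp hq with rfl | hq
    exacts [hp, hm q hq]

/-- The block finset used as the support of the hard distribution. -/
def blk (k : ℕ) : Finset (ℕ × Bool) := (Finset.Icc 1 k).image fun j => (nkj k j, true)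

lemma mem_blk {k : ℕ} {p : ℕ × Bool} : p ∈ blk k ↔ ∃ j, 1 ≤ j ∧ j ≤ k ∧ p = (nkj k j, true) := by
  simp only [blk, Finset.mem_image, Finset.mem_Icc]
  constructor
  · rintro ⟨j, ⟨h1, h2⟩, rfl⟩; exact ⟨j, h1, h2, rfl⟩
  · rintro ⟨j, h1, h2, rfl⟩; exact ⟨j, ⟨h1, h2⟩, rfl⟩

lemma blk_nonempty {k : ℕ} (hk : 1 ≤ k) : (blk k).Nonempty :=
  ⟨(nkj k 1, true), mem_blk.mpr ⟨1, le_refl 1, hk, rfl⟩⟩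

lemma card_blk {k : ℕ} : (blk k).card = k := by
  rw [blk, Finset.card_image_of_injOn, Nat.card_Icc]
  · omega
  · intro a _ b _ hab
    exact nkj_inj (congrArg Prod.fst hab)

lemma part2_correct {f : ℕ → ℕ} {A : Learner} (hproper : ProperFor A (Hf f))
    (hPAC : PACLearns A (Hf f)) {g : ℕ → ℕ}
    (hgb : ∀ n, sampleComplexity A (Hf f) n ≤ g n) {k : ℕ} (hk : 1 ≤ k) :
    (bEx (fun i =>
        bAll (fun j => A ((tuples (g (k + 1)) (Sk k)).getD i []) (nkj k (j + 1))) k)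
      (tuples (g (k + 1)) (Sk k)).length = true) ↔ k ∈ Set.range f := by
  set m := g (k + 1) with hm
  set L := tuples m (Sk k) with hL
  constructor
  · intro hb
    by_contra hkr
    obtain ⟨i, hi, hball⟩ := bEx_eq_true.mp hb
    obtain ⟨j, h1, h2, hfalse⟩ := miss hk hkr (hproper (L.getD i []))
    have := bAll_eq_true.mp hball (j - 1) (by omega)
    rw [Nat.sub_add_cancel h1] at this
    rw [hfalse] at this
    exact Bool.false_ne_true this
  · rintro ⟨a, hak⟩
    -- the hard distribution
    set D := PMF.uniformOfFinset (blk k) (blk_nonempty hk) with hD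
    -- PAC condition at accuracy k+1 and sample size m
    have hPACm : PACCondition A (Hf f) (k + 1) m := by
      have hne : {m₀ | ∀ m' ≥ m₀, PACCondition A (Hf f) (k + 1) m'}.Nonempty := hPAC (k + 1)
      have hmem := Nat.sInf_mem hne
      exact hmem m (hgb (k + 1))
    have h1 := hPACm D
    -- the inf of the generalization error is 0, witnessed by hA f a
    have hinf : (⨅ h ∈ Hf f, genError D h) = 0 := by
      apply le_antisymm _ zero_le
      have h0 : genError D (hA f a) = 0 := by
        rw [genError, PMF.toOuterMeasure_apply_eq_zero_iff, PMF.support_uniformOfFinset]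
        rw [Set.disjoint_left]
        rintro p hp hbad
        obtain ⟨j, hj1, hj2, rfl⟩ := mem_blk.mp hp
        exact hbad (hA_nkj hak hj1 hj2)
      exact h0 ▸ iInf₂_le (hA f a) (hA_mem a)
    -- the event has positive probability, hence contains a support point
    have hpos : samplePr D m {S | genError D (A S) ≤
        (⨅ h ∈ Hf f, genError D h) + (((k + 1 : ℕ) : ℝ≥0∞))⁻¹} ≠ 0 := by
      intro h0
      rw [h0] at h1
      have h1' : (1 : ℝ≥0∞) - (((k + 1 : ℕ) : ℝ≥0∞))⁻¹ = 0 := le_zero_iff.mp h1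
      have : (1 : ℝ≥0∞) ≤ (((k + 1 : ℕ) : ℝ≥0∞))⁻¹ := by
        rwa [tsub_eq_zero_iff_le] at h1'
      have hlt : (((k + 1 : ℕ) : ℝ≥0∞))⁻¹ < 1 := by
        apply ENNReal.inv_lt_one.mpr
        exact_mod_cast Nat.lt_add_of_pos_left hk
      exact absurd this (not_le.mpr hlt)
    rw [samplePr, Ne, PMF.toOuterMeasure_apply_eq_zero_iff, Set.not_disjoint_iff] at hpos
    obtain ⟨S, hSsupp, hSE⟩ := hpos
    obtain ⟨hSlen, hSmem⟩ := mem_support_iid hSsupp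
    have hSgen : genError D (A S) ≤ (((k + 1 : ℕ) : ℝ≥0∞))⁻¹ := by
      have := hSE
      simp only [Set.mem_setOf_eq, hinf, zero_add] at this
      exact this
    -- all block points are classified positively by A S
    have hallpos : ∀ j, 1 ≤ j → j ≤ k → A S (nkj k j) = true := by
      intro j hj1 hj2
      by_contra hne
      have hfalse : A S (nkj k j) = false := by
        cases hval : A S (nkj k j)
        · rfl
        · exact absurd hval hne
      have hsing : ((k : ℝ≥0∞))⁻¹ ≤ genError D (A S) := by
        have hmono : D.toOuterMeasure {(nkj k j, true)} ≤ genError D (A S) := by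
          apply PMF.toOuterMeasure_mono
          rintro p ⟨hp, -⟩
          rw [Set.mem_singleton_iff] at hp
          subst hp
          simp [Set.mem_setOf_eq, hfalse]
        have hval : D (nkj k j, true) = ((k : ℝ≥0∞))⁻¹ := by
          rw [hD, PMF.uniformOfFinset_apply_of_mem (blk_nonempty hk) (mem_blk.mpr ⟨j, hj1, hj2, rfl⟩), card_blk]
        rwa [PMF.toOuterMeasure_apply_singleton, hval] at hmono
      have hcontra : (((k + 1 : ℕ) : ℝ≥0∞))⁻¹ < ((k : ℝ≥0∞))⁻¹ := by
        apply ENNReal.inv_lt_inv.mpr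
        exact_mod_cast Nat.lt_succ_self k
      exact absurd (le_trans hsing hSgen) (not_le.mpr hcontra)
    -- S is a candidate tuple
    have hStup : S ∈ L := by
      rw [hL, mem_tuples]
      refine ⟨hSlen, ?_⟩
      intro p hp
      have := hSmem p hp
      rw [hD, PMF.support_uniformOfFinset] at this
      obtain ⟨j, hj1, hj2, rfl⟩ := mem_blk.mp this
      exact mem_Sk.mpr ⟨j, hj1, hj2, rfl⟩
    obtain ⟨i, hilt, hig⟩ := List.mem_iff_getElem.mp hStup
    apply bEx_eq_true.mpr
    refine ⟨i, hilt, ?_⟩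
    apply bAll_eq_true.mpr
    intro j hj
    rw [List.getD_eq_getElem L [] hilt, hig]
    exact hallpos (j + 1) (by omega) (by omega)

/-- For a total computable injective `f : ℕ → ℕ`: if the class `𝓗_f`
has a computable ERM, then the range of `f` is a decidable subset of `ℕ`. Consequently,
if the range of `f` is undecidable, then `𝓗_f` is not properly SCPAC learnable. -/
theorem Hf_computable_ERM_implies_range_decidable (f : ℕ → ℕ) (hf : Computable f)
    (hinj : Function.Injective f) :
    ((∃ A : Learner, ComputableLearner A ∧ IsERM A (Hf f)) →
      ComputablePred (fun n => n ∈ Set.range f)) ∧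
    (¬ ComputablePred (fun n => n ∈ Set.range f) →
      ¬ ProperlySCPACLearnable (Hf f)) := by
  constructor
  · exact part1
  · intro hund hP
    apply hund
    obtain ⟨A, hAc, hproper, hPAC, g, hgc, hgb⟩ := hP
    have hcand : Computable fun k => tuples (g (k + 1)) (Sk k) :=
      primrec_tuples.to_comp.comp primrec_Sk.to_comp (hgc.comp Computable.succ)
    have hT : Computable₂ fun k i => (tuples (g (k + 1)) (Sk k)).getD i [] :=
      (Primrec.list_getD ([] : Sample)).to_comp.comp (hcand.comp Computable.fst)
        Computable.snd
    have hlen : Computable fun k => (tuples (g (k + 1)) (Sk k)).length :=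
      Primrec.list_length.to_comp.comp hcand
    have hinner : Computable fun x : ℕ × ℕ =>
        bAll (fun j => A ((tuples (g (x.1 + 1)) (Sk x.1)).getD x.2 []) (nkj x.1 (j + 1))) x.1 := by
      apply computable_bAll
        (q := fun (x : ℕ × ℕ) j =>
          A ((tuples (g (x.1 + 1)) (Sk x.1)).getD x.2 []) (nkj x.1 (j + 1)))
        (n := fun x : ℕ × ℕ => x.1)
      · exact Computable.to₂ (hAc.comp
          (hT.comp (Computable.fst.comp Computable.fst) (Computable.snd.comp Computable.fst))
          (primrec_nkj.to_comp.comp (Computable.fst.comp Computable.fst)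
            (Computable.succ.comp Computable.snd)))
      · exact Computable.fst
    apply pred_of_tail (β := fun k =>
      bEx (fun i =>
          bAll (fun j => A ((tuples (g (k + 1)) (Sk k)).getD i []) (nkj k (j + 1))) k)
        (tuples (g (k + 1)) (Sk k)).length)
    · exact computable_bEx hinner.to₂ hlen
    · intro k hk
      exact part2_correct hproper hPAC hgb hk
end
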